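/- arXiv:2008.02709 — 2 statements merged into one kernel-verified Lean document; each statement's English description precedes it below -/
import Mathlib

section
/- Let Γ be a countable group acting by isometries on a metric space X, μ a probability measure on Γ whose support generates a semigroup containing a Schottky set, and z_0 ∈ X. Then there exist a constant c > 1 and an integer p ∈ ℕ such that for all x, y ∈ [0,∞) and all n, m ∈ ℕ, P(d(z_0, z_{m+n+p}) ≥ x + y − c) ≥ c^{−1}·P(d(z_0,z_m) ≥ x)·P(d(z_0,z_n) ≥ y). -/
open MeasureTheory ProbabilityTheory Filter Topology Pointwise

noncomputable section

namespace BMS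

/-- The Gromov product `(y,z)_x := (d(y,x) + d(z,x) - d(y,z))/2`. -/
def gp {X : Type*} [MetricSpace X] (x y z : X) : ℝ :=
  (dist y x + dist z x - dist y z) / 2

/-- `X` is `δ`-hyperbolic. -/
def HypWith (δ : ℝ) (X : Type*) [MetricSpace X] : Prop :=
  ∀ x₀ x₁ x₂ x₃ : X, min (gp x₀ x₃ x₁) (gp x₀ x₃ x₂) - δ ≤ gp x₀ x₁ x₂

/-- `X` is Gromov-hyperbolic. -/
def GromovHyperbolic (X : Type*) [MetricSpace X] : Prop :=
  ∃ δ : ℝ, 0 < δ ∧ HypWith δ X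

/-- `X` is a geodesic metric space: any two points are joined by an isometrically
parametrized path. -/
def GeodesicSpace (X : Type*) [MetricSpace X] : Prop :=
  ∀ x y : X, ∃ f : ℝ → X, f 0 = x ∧ f (dist x y) = y ∧
    ∀ s ∈ Set.Icc (0 : ℝ) (dist x y), ∀ t ∈ Set.Icc (0 : ℝ) (dist x y),
      dist (f s) (f t) = |s - t|

/-- The action of `Γ` on `X` is by isometries. -/
def IsIsomAction (Γ X : Type*) [Group Γ] [MetricSpace X] [MulAction Γ X] : Prop :=
  ∀ (g : Γ) (x y : X), dist (g • x) (g • y) = dist x y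

/-- The positions of the random walk: `walk ω n = ω 1 * ⋯ * ω n`. -/
def walk {Γ Ω : Type*} [Group Γ] (ω : ℕ → Ω → Γ) : ℕ → Ω → Γ
  | 0 => fun _ => 1
  | n + 1 => fun ρ => walk ω n ρ * ω (n + 1) ρ

/-- Extended-real valued logarithm of an extended nonnegative real, with `elog 0 = ⊥`. -/
def elog (x : ENNReal) : EReal :=
  if x = 0 then ⊥ else ((Real.log x.toReal : ℝ) : EReal)

/-- `(1/n)·log P(Z n ∈ R)`, as an extended real number. -/
def logProbRate {Ω : Type*} [MeasurableSpace Ω] (P : Measure Ω) (Z : ℕ → Ω → ℝ)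
    (R : Set ℝ) (n : ℕ) : EReal :=
  (((n : ℝ)⁻¹ : ℝ) : EReal) * elog (P {ρ | Z n ρ ∈ R})

/-- The sequence of real random variables `Z n` satisfies a (full) large deviation
principle under `P` with rate function `I`. -/
def HasLDP {Ω : Type*} [MeasurableSpace Ω] (P : Measure Ω) (Z : ℕ → Ω → ℝ)
    (I : ℝ → ENNReal) : Prop :=
  LowerSemicontinuous I ∧
  ∀ R : Set ℝ, MeasurableSet R →
    (-(⨅ α ∈ interior R, ((I α : EReal))) ≤ liminf (logProbRate P Z R) atTop ∧
      limsup (logProbRate P Z R) atTop ≤ -(⨅ α ∈ closure R, ((I α : EReal))))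

/-- Weak large deviation principle: the lower bound holds for all measurable sets and
the upper bound for bounded measurable sets. -/
def HasWeakLDP {Ω : Type*} [MeasurableSpace Ω] (P : Measure Ω) (Z : ℕ → Ω → ℝ)
    (I : ℝ → ENNReal) : Prop :=
  LowerSemicontinuous I ∧
  ∀ R : Set ℝ, MeasurableSet R →
    (-(⨅ α ∈ interior R, ((I α : EReal))) ≤ liminf (logProbRate P Z R) atTop ∧
      (Bornology.IsBounded R →
        limsup (logProbRate P Z R) atTop ≤ -(⨅ α ∈ closure R, ((I α : EReal)))))

/-- Convexity of an `[0,∞]`-valued function on `ℝ`. -/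
def ConvexRate (I : ℝ → ENNReal) : Prop :=
  ∀ x y t : ℝ, 0 ≤ t → t ≤ 1 →
    I (t * x + (1 - t) * y) ≤ ENNReal.ofReal t * I x + ENNReal.ofReal (1 - t) * I y

/-- A rate function is proper if its sublevel sets are compact. -/
def ProperRate (I : ℝ → ENNReal) : Prop :=
  ∀ c : ENNReal, c ≠ ⊤ → IsCompact {x : ℝ | I x ≤ c}

/-- The support of a measure on a countable discrete space. -/
def measSupport {Γ : Type*} [MeasurableSpace Γ] (μ : Measure Γ) : Set Γ :=
  {g | μ {g} ≠ 0}

/-- `S` is a Schottky set with respect to the basepoint `z0`. -/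
def IsSchottky {Γ X : Type*} [Group Γ] [MetricSpace X] [MulAction Γ X]
    (z0 : X) (S : Set Γ) : Prop :=
  S.Finite ∧ S.Nonempty ∧ ∃ C : ℝ, 0 < C ∧ ∀ y z : X,
    (2 / 3 : ℝ) * (S.ncard : ℝ) ≤ (({s ∈ S | gp z0 y (s • z) ≤ C} : Set Γ).ncard : ℝ)

/-- `u : ℤ → X` is a quasi-geodesic. -/
def QuasiGeodZ {X : Type*} [MetricSpace X] (u : ℤ → X) : Prop :=
  ∃ lam C : ℝ, 1 ≤ lam ∧ 0 ≤ C ∧ ∀ m n : ℤ,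
    lam⁻¹ * |(m : ℝ) - (n : ℝ)| - C ≤ dist (u m) (u n) ∧
      dist (u m) (u n) ≤ lam * |(m : ℝ) - (n : ℝ)| + C

/-- `g` is a loxodromic isometry: some (equivalently, any) orbit map `n ↦ g^n • x`
is a quasi-geodesic. -/
def IsLoxodromic (X : Type*) {Γ : Type*} [MetricSpace X] [Group Γ] [MulAction Γ X]
    (g : Γ) : Prop :=
  ∃ x : X, QuasiGeodZ (fun n : ℤ => (g ^ n) • x)

/-- The forward (`s = true`) or backward (`s = false`) orbit ray of `g` from `z0`. -/
def raySeq {Γ X : Type*} [Group Γ] [MetricSpace X] [MulAction Γ X]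
    (z0 : X) (g : Γ) (s : Bool) : ℕ → X :=
  fun n => (g ^ (if s then (n : ℤ) else -(n : ℤ))) • z0

/-- Two sequences define the same point of the Gromov boundary. -/
def SameEnd {X : Type*} [MetricSpace X] (z0 : X) (u v : ℕ → X) : Prop :=
  Tendsto (fun n => gp z0 (u n) (v n)) atTop atTop

/-- `g` and `h` are independent loxodromic elements: both are loxodromic and their
four boundary fixed points are pairwise distinct. -/
def IndepLox {Γ X : Type*} [Group Γ] [MetricSpace X] [MulAction Γ X]
    (z0 : X) (g h : Γ) : Prop :=
  IsLoxodromic X g ∧ IsLoxodromic X h ∧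
  (¬ SameEnd z0 (raySeq z0 g true) (raySeq z0 g false)) ∧
  (¬ SameEnd z0 (raySeq z0 h true) (raySeq z0 h false)) ∧
  (∀ s t : Bool, ¬ SameEnd z0 (raySeq z0 g s) (raySeq z0 h t))

/-- A set `B` of isometries is non-elementary: the subsemigroup it generates contains
two independent loxodromic elements. -/
def NonElementarySet {Γ X : Type*} [Group Γ] [MetricSpace X] [MulAction Γ X]
    (z0 : X) (B : Set Γ) : Prop :=
  ∃ g h : Γ, g ∈ Subsemigroup.closure B ∧ h ∈ Subsemigroup.closure B ∧ IndepLox z0 g h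

/-- A probability measure is non-elementary if its support is. -/
def NonElementary {Γ X : Type*} [Group Γ] [MeasurableSpace Γ] [MetricSpace X] [MulAction Γ X]
    (z0 : X) (μ : Measure Γ) : Prop :=
  NonElementarySet z0 (measSupport μ)

/-- The translation length `τ(g) := inf_x d(x, g•x)`. -/
def translationLength (X : Type*) {Γ : Type*} [MetricSpace X] [Group Γ] [MulAction Γ X]
    (g : Γ) : ℝ :=
  ⨅ x : X, dist x (g • x)

/-- The asymptotic (stable) translation length `ℓ(g) = lim_n d(g^n • z0, z0)/n`;
by Fekete's subadditivity lemma the limit equals the infimum over `n ≥ 1`. -/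
def stableLength {Γ X : Type*} [Group Γ] [MetricSpace X] [MulAction Γ X]
    (z0 : X) (g : Γ) : ℝ :=
  ⨅ n : ℕ, dist ((g ^ (n + 1)) • z0) z0 / (n + 1)

/-- `B` is non-arithmetic: some power `B^n` contains two elements with different
asymptotic translation lengths. -/
def NonArithmetic {Γ X : Type*} [Group Γ] [MetricSpace X] [MulAction Γ X]
    (z0 : X) (B : Set Γ) : Prop :=
  ∃ (n : ℕ) (g₁ g₂ : Γ), g₁ ∈ B ^ n ∧ g₂ ∈ B ^ n ∧
    stableLength z0 g₁ ≠ stableLength z0 g₂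

/-- `sup_{g ∈ B^n} d(g•z0, z0)`, valued in `[0,∞]`. -/
def dispSup {Γ X : Type*} [Group Γ] [MetricSpace X] [MulAction Γ X]
    (z0 : X) (B : Set Γ) (n : ℕ) : ENNReal :=
  ⨆ g ∈ B ^ n, ENNReal.ofReal (dist (g • z0) z0)

/-- `inf_{g ∈ B^n} d(g•z0, z0)`, valued in `[0,∞]`. -/
def dispInf {Γ X : Type*} [Group Γ] [MetricSpace X] [MulAction Γ X]
    (z0 : X) (B : Set Γ) (n : ℕ) : ENNReal :=
  ⨅ g ∈ B ^ n, ENNReal.ofReal (dist (g • z0) z0)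

/-- `μ` has a finite exponential moment:
`E[exp (λ·d(z0, ω 1 • z0))] < ∞` for some `λ > 0`. -/
def FiniteExpMoment {Γ Ω X : Type*} [Group Γ] [MetricSpace X] [MulAction Γ X]
    [MeasurableSpace Ω] (P : Measure Ω) (ω : ℕ → Ω → Γ) (z0 : X) : Prop :=
  ∃ lam : ℝ, 0 < lam ∧
    Integrable (fun ρ => Real.exp (lam * dist ((ω 1 ρ) • z0) z0)) P

/-- The increments `ω i` are i.i.d. with common law `μ`. -/
def IIDWalk {Γ Ω : Type*} [Group Γ] [MeasurableSpace Γ] [MeasurableSpace Ω]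
    (P : Measure Ω) (ω : ℕ → Ω → Γ) (μ : Measure Γ) : Prop :=
  (∀ i, Measurable (ω i)) ∧
  iIndepFun (m := fun _ : ℕ => (inferInstance : MeasurableSpace Γ)) ω P ∧
  ∀ i, P.map (ω i) = μ

/-- `-(1/n)·log P(d(z_n, z0) ≤ a·n)`. -/
def belowRate {Γ Ω X : Type*} [Group Γ] [MetricSpace X] [MulAction Γ X]
    [MeasurableSpace Ω] (P : Measure Ω) (ω : ℕ → Ω → Γ) (z0 : X) (a : ℝ) (n : ℕ) : EReal :=
  -((((n : ℝ)⁻¹ : ℝ) : EReal) * elog (P {ρ | dist ((walk ω n ρ) • z0) z0 ≤ a * n}))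

/-- `-(1/n)·log P(d(z_n, z0) ≥ a·n)`. -/
def aboveRate {Γ Ω X : Type*} [Group Γ] [MetricSpace X] [MulAction Γ X]
    [MeasurableSpace Ω] (P : Measure Ω) (ω : ℕ → Ω → Γ) (z0 : X) (a : ℝ) (n : ℕ) : EReal :=
  -((((n : ℝ)⁻¹ : ℝ) : EReal) * elog (P {ρ | a * n ≤ dist ((walk ω n ρ) • z0) z0}))

end BMS
namespace BMS

open scoped ENNReal

section AuxMeas

/-- In a countable space with measurable singletons, every set is measurable. -/
lemma allMeas {A : Type*} [MeasurableSpace A] [Countable A] [MeasurableSingletonClass A]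
    (s : Set A) : MeasurableSet s :=
  (Set.to_countable s).measurableSet

lemma mscPi {ι A : Type*} [Countable ι] [MeasurableSpace A] [MeasurableSingletonClass A] :
    MeasurableSingletonClass (ι → A) := by
  constructor
  intro v
  have hv : ({v} : Set (ι → A)) = Set.pi Set.univ (fun i => {v i}) := by
    ext f; simp [funext_iff, Set.mem_pi]
  rw [hv]
  exact MeasurableSet.univ_pi fun i => measurableSet_singleton _

lemma measCountTsum {A : Type*} [MeasurableSpace A] [Countable A] [MeasurableSingletonClass A]
    (ν : MeasureTheory.Measure A) (E : Set A) : ν E = ∑' (v : E), ν {(v : A)} := by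
  conv_lhs => rw [show E = ⋃ (v : E), {(v : A)} by ext a; simp]
  rw [MeasureTheory.measure_iUnion ?_ fun v => measurableSet_singleton _]
  intro a b hab
  simp only [Function.onFun, Set.disjoint_singleton]
  exact Subtype.coe_injective.ne hab

lemma listProdLeOne : ∀ l : List ℝ≥0∞, (∀ a ∈ l, a ≤ 1) → l.prod ≤ 1 := by
  intro l
  induction l with
  | nil => intro _; simp
  | cons a t ih =>
    intro h
    rw [List.prod_cons]
    exact mul_le_one' (h a (List.mem_cons_self)) (ih fun b hb => h b (List.mem_cons_of_mem a hb))

end AuxMeas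

section AuxBlk

variable {Γ : Type*} [Group Γ] {Ω : Type*}

/-- The product of the letters `ω (a+1), …, ω (a+b)`. -/
def blk (ω : ℕ → Ω → Γ) (a b : ℕ) (ρ : Ω) : Γ :=
  (List.ofFn fun i : Fin b => ω (a + 1 + (i : ℕ)) ρ).prod

lemma blk_succ (ω : ℕ → Ω → Γ) (a b : ℕ) (ρ : Ω) :
    blk ω a (b + 1) ρ = blk ω a b ρ * ω (a + 1 + b) ρ := by
  unfold blk
  rw [List.ofFn_succ', List.prod_concat]
  simp

lemma blk_add (ω : ℕ → Ω → Γ) (a b c : ℕ) (ρ : Ω) :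
    blk ω a (b + c) ρ = blk ω a b ρ * blk ω (a + b) c ρ := by
  induction c with
  | zero => simp [blk, List.ofFn_zero]
  | succ c ih =>
    have h1 : b + (c + 1) = (b + c) + 1 := rfl
    rw [h1, blk_succ, ih, blk_succ, mul_assoc]
    have h2 : a + 1 + (b + c) = a + b + 1 + c := by omega
    rw [h2]

lemma walk_eq_blk (ω : ℕ → Ω → Γ) (r : ℕ) (ρ : Ω) : walk ω r ρ = blk ω 0 r ρ := by
  induction r with
  | zero => simp [walk, blk, List.ofFn_zero]
  | succ r ih =>
    have h1 : walk ω (r + 1) ρ = walk ω r ρ * ω (r + 1) ρ := rfl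
    rw [h1, ih, blk_succ]
    have h2 : 0 + 1 + r = r + 1 := by omega
    rw [h2]

end AuxBlk

end BMS
namespace BMS

open MeasureTheory ProbabilityTheory
open scoped ENNReal

section AuxProb

variable {Γ : Type*} [Group Γ] [Countable Γ] [MeasurableSpace Γ] [MeasurableSingletonClass Γ]
variable {Ω : Type*} [MeasurableSpace Ω]

lemma cylProb (P : Measure Ω) (ω : ℕ → Ω → Γ) (μ : Measure Γ) (hw : IIDWalk P ω μ)
    {ι : Type*} [Fintype ι] (τ : ι → ℕ) (hτ : Function.Injective τ) (v : ι → Γ) :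
    P ((fun ρ (i : ι) => ω (τ i) ρ) ⁻¹' {v}) = ∏ i, μ {v i} := by
  classical
  obtain ⟨hmeas, hind, hlaw⟩ := hw
  set sets : ℕ → Set Γ := fun j => ⋃ (i : ι) (_ : τ i = j), ({v i} : Set Γ) with hsets
  have hseti : ∀ i : ι, sets (τ i) = {v i} := by
    intro i
    ext g
    simp only [hsets, Set.mem_iUnion, Set.mem_singleton_iff]
    constructor
    · rintro ⟨i', hi', rfl⟩
      cases hτ hi'
      rfl
    · rintro rfl
      exact ⟨i, rfl, rfl⟩
  have hpre : (fun ρ (i : ι) => ω (τ i) ρ) ⁻¹' {v}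
      = ⋂ j ∈ Finset.image τ Finset.univ, (ω j) ⁻¹' (sets j) := by
    ext ρ
    simp only [Set.mem_preimage, Set.mem_singleton_iff, funext_iff, Set.mem_iInter,
      Finset.mem_image, Finset.mem_univ, true_and]
    constructor
    · rintro hv j ⟨i, rfl⟩
      rw [hseti i]
      exact hv i
    · intro hj i
      have h := hj (τ i) ⟨i, rfl⟩
      rw [hseti i] at h
      exact h
  have key := hind.measure_inter_preimage_eq_mul (Finset.image τ Finset.univ)
    (sets := sets) (fun j _ => allMeas _)
  rw [hpre, key, Finset.prod_image (fun a _ b _ hab => hτ hab)]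
  refine Finset.prod_congr rfl fun i _ => ?_
  rw [hseti i, ← hlaw (τ i), Measure.map_apply (hmeas _) (measurableSet_singleton _)]

lemma tupleLaw (P : Measure Ω) [IsProbabilityMeasure P] (ω : ℕ → Ω → Γ) (μ : Measure Γ)
    [IsProbabilityMeasure μ] (hw : IIDWalk P ω μ)
    {ι : Type*} [Fintype ι] (τ : ι → ℕ) (hτ : Function.Injective τ) :
    P.map (fun ρ (i : ι) => ω (τ i) ρ) = Measure.pi (fun _ : ι => μ) := by
  haveI : MeasurableSingletonClass (ι → Γ) := mscPi
  have hT : Measurable (fun ρ (i : ι) => ω (τ i) ρ) :=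
    measurable_pi_lambda _ fun i => hw.1 (τ i)
  refine Measure.ext fun E _hE => ?_
  rw [measCountTsum (P.map _) E, measCountTsum (Measure.pi _) E]
  refine tsum_congr fun v => ?_
  rw [Measure.map_apply hT (measurableSet_singleton _), cylProb P ω μ hw τ hτ]
  rw [show ({(v : ι → Γ)} : Set (ι → Γ)) = Set.pi Set.univ (fun i => {(v : ι → Γ) i}) by
    ext f; simp [funext_iff, Set.mem_pi]]
  rw [Measure.pi_pi]

lemma eventProb (P : Measure Ω) [IsProbabilityMeasure P] (ω : ℕ → Ω → Γ) (μ : Measure Γ)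
    [IsProbabilityMeasure μ] (hw : IIDWalk P ω μ)
    {ι : Type*} [Fintype ι] (τ : ι → ℕ) (hτ : Function.Injective τ) (E : Set (ι → Γ)) :
    P {ρ | (fun i : ι => ω (τ i) ρ) ∈ E} = Measure.pi (fun _ : ι => μ) E := by
  haveI : MeasurableSingletonClass (ι → Γ) := mscPi
  have hT : Measurable (fun ρ (i : ι) => ω (τ i) ρ) :=
    measurable_pi_lambda _ fun i => hw.1 (τ i)
  rw [← tupleLaw P ω μ hw τ hτ, Measure.map_apply hT (allMeas E)]
  rfl

lemma piFactor {κ₁ κ₂ : Type*} [Fintype κ₁] [Fintype κ₂] (μ : Measure Γ)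
    [IsProbabilityMeasure μ] (A : Set (κ₁ → Γ)) (B : Set (κ₂ → Γ)) :
    Measure.pi (fun _ : κ₁ ⊕ κ₂ => μ)
        {w | (fun i => w (Sum.inl i)) ∈ A ∧ (fun i => w (Sum.inr i)) ∈ B}
      = Measure.pi (fun _ : κ₁ => μ) A * Measure.pi (fun _ : κ₂ => μ) B := by
  haveI : MeasurableSingletonClass (κ₁ → Γ) := mscPi
  haveI : MeasurableSingletonClass (κ₂ → Γ) := mscPi
  have hmp := measurePreserving_sumPiEquivProdPi (X := fun _ : κ₁ ⊕ κ₂ => Γ) (fun _ => μ)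
  have hset : {w : κ₁ ⊕ κ₂ → Γ | (fun i => w (Sum.inl i)) ∈ A ∧ (fun i => w (Sum.inr i)) ∈ B}
      = (MeasurableEquiv.sumPiEquivProdPi (fun _ : κ₁ ⊕ κ₂ => Γ)) ⁻¹' (A ×ˢ B) := rfl
  rw [hset, hmp.measure_preimage ((allMeas A).prod (allMeas B)).nullMeasurableSet,
    Measure.prod_prod]

lemma piList (μ : Measure Γ) [IsProbabilityMeasure μ] (l : List Γ) :
    Measure.pi (fun _ : Fin l.length => μ) ({l.get} : Set (Fin l.length → Γ))
      = (l.map fun g => μ {g}).prod := by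
  rw [show ({l.get} : Set (Fin l.length → Γ)) = Set.pi Set.univ (fun i => {l.get i}) by
    ext f; simp [funext_iff, Set.mem_pi]]
  rw [Measure.pi_pi]
  conv_rhs => rw [← List.ofFn_get l, List.map_ofFn, List.prod_ofFn]
  rfl

end AuxProb

end BMS
namespace BMS

open MeasureTheory ProbabilityTheory
open scoped ENNReal

section AuxGeom

variable {Γ : Type*} [Group Γ] {X : Type*} [MetricSpace X] [MulAction Γ X]

lemma dist_mul_smul (hiso : IsIsomAction Γ X) (z0 : X) (g u : Γ) :
    dist ((g * u) • z0) z0 = dist (u • z0) (g⁻¹ • z0) := by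
  rw [← hiso g⁻¹ ((g * u) • z0) z0, ← mul_smul, inv_mul_cancel_left]

lemma dist_inv_smul (hiso : IsIsomAction Γ X) (z0 : X) (g : Γ) :
    dist (g⁻¹ • z0) z0 = dist (g • z0) z0 := by
  rw [← hiso g (g⁻¹ • z0) z0, smul_inv_smul, dist_comm]

lemma dist_smul_lower (hiso : IsIsomAction Γ X) (z0 : X) (g : Γ) (q : X) :
    dist q z0 - dist (g • z0) z0 ≤ dist (g • q) z0 := by
  have h1 : dist q z0 = dist (g • q) (g • z0) := (hiso g q z0).symm
  have h2 : dist (g • q) (g • z0) ≤ dist (g • q) z0 + dist z0 (g • z0) := dist_triangle _ _ _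
  have h3 : dist z0 (g • z0) = dist (g • z0) z0 := dist_comm _ _
  linarith

lemma geom_main (hiso : IsIsomAction Γ X) (z0 : X) {C x y : ℝ} (γ s' η : Γ)
    (hx : x ≤ dist (γ • z0) z0) (hy : y ≤ dist (η • z0) z0)
    (hgp : gp z0 (γ⁻¹ • z0) ((s' * η) • z0) ≤ C) :
    x + y - (2 * C + dist (s' • z0) z0) ≤ dist ((γ * (s' * η)) • z0) z0 := by
  rw [dist_mul_smul hiso z0 γ (s' * η)]
  have h1 : dist (γ⁻¹ • z0) z0 = dist (γ • z0) z0 := dist_inv_smul hiso z0 γ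
  have h2 : dist (η • z0) z0 - dist (s' • z0) z0 ≤ dist ((s' * η) • z0) z0 := by
    have h := dist_smul_lower hiso z0 s' (η • z0)
    rwa [← mul_smul] at h
  have h3 : gp z0 (γ⁻¹ • z0) ((s' * η) • z0)
      = (dist (γ⁻¹ • z0) z0 + dist ((s' * η) • z0) z0
          - dist (γ⁻¹ • z0) ((s' * η) • z0)) / 2 := rfl
  have h4 : dist (γ⁻¹ • z0) ((s' * η) • z0) = dist ((s' * η) • z0) (γ⁻¹ • z0) := dist_comm _ _
  rw [h3] at hgp
  linarith

lemma geom_shift (hiso : IsIsomAction Γ X) (z0 : X) (γ h : Γ) :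
    dist (γ • z0) z0 - dist (h • z0) z0 ≤ dist ((γ * h) • z0) z0 := by
  rw [dist_mul_smul hiso z0 γ h]
  have h1 : dist (γ⁻¹ • z0) z0 = dist (γ • z0) z0 := dist_inv_smul hiso z0 γ
  have h2 : dist (γ⁻¹ • z0) z0 ≤ dist (γ⁻¹ • z0) (h • z0) + dist (h • z0) z0 := dist_triangle _ _ _
  have h3 : dist (h • z0) (γ⁻¹ • z0) = dist (γ⁻¹ • z0) (h • z0) := dist_comm _ _
  linarith

end AuxGeom

section AuxShift

variable {Γ : Type*} [Group Γ] [Countable Γ] [MeasurableSpace Γ] [MeasurableSingletonClass Γ]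
variable {Ω : Type*} [MeasurableSpace Ω]
variable {X : Type*} [MetricSpace X] [MulAction Γ X]

lemma shift_step (P : Measure Ω) [IsProbabilityMeasure P] (ω : ℕ → Ω → Γ) (μ : Measure Γ)
    [IsProbabilityMeasure μ] (hw : IIDWalk P ω μ) (hiso : IsIsomAction Γ X) (z0 : X)
    (g0 : Γ) (r : ℕ) (u : ℝ) :
    μ {g0} * P {ρ | u ≤ dist (walk ω r ρ • z0) z0}
      ≤ P {ρ | u - dist (g0 • z0) z0 ≤ dist (walk ω (r + 1) ρ • z0) z0} := by
  classical
  set τ : Fin r ⊕ Fin 1 → ℕ := Sum.elim (fun i => 0 + 1 + (i : ℕ)) (fun _ => r + 1) with hτdef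
  have hτ : Function.Injective τ := by
    rintro (a | a) (b | b) hab <;>
      simp only [hτdef, Sum.elim_inl, Sum.elim_inr] at hab
    · exact congrArg Sum.inl (Fin.ext (by omega))
    · exact absurd hab (by have := a.isLt; omega)
    · exact absurd hab (by have := b.isLt; omega)
    · exact congrArg Sum.inr (Subsingleton.elim a b)
  set A : Set (Fin r → Γ) := {v | u ≤ dist ((List.ofFn v).prod • z0) z0} with hA
  set B : Set (Fin 1 → Γ) := {fun _ => g0} with hB
  set E : Set (Fin r ⊕ Fin 1 → Γ) :=
    {w | (fun i => w (Sum.inl i)) ∈ A ∧ (fun i => w (Sum.inr i)) ∈ B} with hE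
  have h1 : P {ρ | (fun z => ω (τ z) ρ) ∈ E} = Measure.pi (fun _ : Fin r ⊕ Fin 1 => μ) E :=
    eventProb P ω μ hw τ hτ E
  have h2 : Measure.pi (fun _ : Fin r ⊕ Fin 1 => μ) E
      = Measure.pi (fun _ : Fin r => μ) A * Measure.pi (fun _ : Fin 1 => μ) B :=
    piFactor μ A B
  have h3 : Measure.pi (fun _ : Fin r => μ) A = P {ρ | u ≤ dist (walk ω r ρ • z0) z0} := by
    rw [← eventProb P ω μ hw (fun i : Fin r => 0 + 1 + (i : ℕ))
      (fun a b hab => Fin.ext (by simpa using hab)) A]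
    congr 1
    ext ρ
    simp only [Set.mem_setOf_eq, hA]
    rw [walk_eq_blk]
    exact Iff.rfl
  have h4 : Measure.pi (fun _ : Fin 1 => μ) B = μ {g0} := by
    rw [show B = Set.pi Set.univ (fun _ : Fin 1 => ({g0} : Set Γ)) by
      ext f; simp [hB, funext_iff, Set.mem_pi]]
    rw [Measure.pi_pi]
    simp
  have hincl : {ρ | (fun z => ω (τ z) ρ) ∈ E}
      ⊆ {ρ | u - dist (g0 • z0) z0 ≤ dist (walk ω (r + 1) ρ • z0) z0} := by
    rintro ρ ⟨hA', hB'⟩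
    have hg : ω (r + 1) ρ = g0 := congrFun (hB' : _ = fun _ : Fin 1 => g0) 0
    have hwk : walk ω (r + 1) ρ = blk ω 0 r ρ * ω (r + 1) ρ := by
      rw [walk_eq_blk, blk_succ, show 0 + 1 + r = r + 1 from by omega]
    have hA'' : u ≤ dist (blk ω 0 r ρ • z0) z0 := hA'
    have hgs := geom_shift hiso z0 (blk ω 0 r ρ) g0
    simp only [Set.mem_setOf_eq]
    rw [hwk, hg]
    linarith
  have heq : μ {g0} * P {ρ | u ≤ dist (walk ω r ρ • z0) z0}
      = P {ρ | (fun z => ω (τ z) ρ) ∈ E} := by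
    rw [h1, h2, h3, h4, mul_comm]
  rw [heq]
  exact measure_mono hincl

lemma shift_iter (P : Measure Ω) [IsProbabilityMeasure P] (ω : ℕ → Ω → Γ) (μ : Measure Γ)
    [IsProbabilityMeasure μ] (hw : IIDWalk P ω μ) (hiso : IsIsomAction Γ X) (z0 : X)
    (g0 : Γ) (r : ℕ) (u : ℝ) (j : ℕ) :
    μ {g0} ^ j * P {ρ | u ≤ dist (walk ω r ρ • z0) z0}
      ≤ P {ρ | u - (j : ℝ) * dist (g0 • z0) z0 ≤ dist (walk ω (r + j) ρ • z0) z0} := by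
  induction j with
  | zero => simp
  | succ j ih =>
    have step := shift_step P ω μ hw hiso z0 g0 (r + j) (u - (j : ℝ) * dist (g0 • z0) z0)
    have hre : u - (j : ℝ) * dist (g0 • z0) z0 - dist (g0 • z0) z0
        = u - ((j + 1 : ℕ) : ℝ) * dist (g0 • z0) z0 := by push_cast; ring
    calc μ {g0} ^ (j + 1) * P {ρ | u ≤ dist (walk ω r ρ • z0) z0}
        = μ {g0} * (μ {g0} ^ j * P {ρ | u ≤ dist (walk ω r ρ • z0) z0}) := by ring
      _ ≤ μ {g0} * P {ρ | u - (j : ℝ) * dist (g0 • z0) z0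
            ≤ dist (walk ω (r + j) ρ • z0) z0} := mul_le_mul_right ih _
      _ ≤ P {ρ | u - (j : ℝ) * dist (g0 • z0) z0 - dist (g0 • z0) z0
            ≤ dist (walk ω (r + j + 1) ρ • z0) z0} := step
      _ = P {ρ | u - ((j + 1 : ℕ) : ℝ) * dist (g0 • z0) z0
            ≤ dist (walk ω (r + (j + 1)) ρ • z0) z0} := by rw [hre, Nat.add_assoc]

end AuxShift

end BMS
namespace BMS

open MeasureTheory ProbabilityTheory
open scoped ENNReal

section AuxInsert

variable {Γ : Type*} [Group Γ] {X : Type*} [MetricSpace X] [MulAction Γ X]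

/-- Tuples of `m` letters whose product moves `z0` at distance at least `x`. -/
def distSet (z0 : X) (x : ℝ) (m : ℕ) : Set (Fin m → Γ) :=
  {v | x ≤ dist ((List.ofFn v).prod • z0) z0}

/-- Pairs of blocks aligned by the Schottky element `s`. -/
def SGset (z0 : X) (C x y : ℝ) (s : Γ) (m n : ℕ) : Set (Fin m ⊕ Fin n → Γ) :=
  {w | (fun i => w (Sum.inl i)) ∈ distSet z0 x m ∧ (fun i => w (Sum.inr i)) ∈ distSet z0 y n ∧
    gp z0 (((List.ofFn fun i : Fin m => w (Sum.inl i)).prod)⁻¹ • z0)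
      ((s * (List.ofFn fun i : Fin n => w (Sum.inr i)).prod) • z0) ≤ C}

variable [Countable Γ] [MeasurableSpace Γ] [MeasurableSingletonClass Γ]
variable {Ω : Type*} [MeasurableSpace Ω]

lemma distSet_prob (P : Measure Ω) [IsProbabilityMeasure P] (ω : ℕ → Ω → Γ) (μ : Measure Γ)
    [IsProbabilityMeasure μ] (hw : IIDWalk P ω μ) (z0 : X) (x : ℝ) (m : ℕ) :
    Measure.pi (fun _ : Fin m => μ) (distSet z0 x m)
      = P {ρ | x ≤ dist (walk ω m ρ • z0) z0} := by
  rw [← eventProb P ω μ hw (fun i : Fin m => 0 + 1 + (i : ℕ))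
    (fun a b hab => Fin.ext (by simpa using hab)) (distSet z0 x m)]
  congr 1
  ext ρ
  simp only [Set.mem_setOf_eq, distSet]
  rw [walk_eq_blk]
  exact Iff.rfl

lemma pairProb (P : Measure Ω) [IsProbabilityMeasure P] (ω : ℕ → Ω → Γ) (μ : Measure Γ)
    [IsProbabilityMeasure μ] (hw : IIDWalk P ω μ) (z0 : X) (x y : ℝ) (m n : ℕ) :
    Measure.pi (fun _ : Fin m ⊕ Fin n => μ)
        {w | (fun i => w (Sum.inl i)) ∈ distSet z0 x m ∧ (fun i => w (Sum.inr i)) ∈ distSet z0 y n}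
      = P {ρ | x ≤ dist (walk ω m ρ • z0) z0} * P {ρ | y ≤ dist (walk ω n ρ • z0) z0} := by
  rw [piFactor μ (distSet z0 x m) (distSet z0 y n), distSet_prob P ω μ hw z0 x m,
    distSet_prob P ω μ hw z0 y n]

lemma insertion_ineq (P : Measure Ω) [IsProbabilityMeasure P] (ω : ℕ → Ω → Γ) (μ : Measure Γ)
    [IsProbabilityMeasure μ] (hw : IIDWalk P ω μ) (hiso : IsIsomAction Γ X) (z0 : X)
    {C x y : ℝ} (s : Γ) (l : List Γ) (hl : l.prod = s) (m n : ℕ) :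
    Measure.pi (fun _ : Fin m ⊕ Fin n => μ) (SGset z0 C x y s m n) * (l.map fun g => μ {g}).prod
      ≤ P {ρ | x + y - (2 * C + dist (s • z0) z0)
          ≤ dist (walk ω (m + l.length + n) ρ • z0) z0} := by
  classical
  set τ : (Fin m ⊕ Fin n) ⊕ Fin l.length → ℕ :=
    Sum.elim (Sum.elim (fun i : Fin m => 0 + 1 + (i : ℕ))
      (fun i : Fin n => m + l.length + 1 + (i : ℕ)))
      (fun j : Fin l.length => m + 1 + (j : ℕ)) with hτdef
  have hτ : Function.Injective τ := by
    rintro ((a | a) | a) ((b | b) | b) hab <;>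
      simp only [hτdef, Sum.elim_inl, Sum.elim_inr] at hab <;>
      first
        | exact congrArg (fun t => Sum.inl (Sum.inl t)) (Fin.ext (by omega))
        | exact congrArg (fun t => Sum.inl (Sum.inr t)) (Fin.ext (by omega))
        | exact congrArg Sum.inr (Fin.ext (by omega))
        | exact absurd hab (by have ha := a.isLt; have hb := b.isLt; omega)
  set E : Set ((Fin m ⊕ Fin n) ⊕ Fin l.length → Γ) :=
    {w | (fun i => w (Sum.inl i)) ∈ SGset z0 C x y s m n ∧
      (fun j => w (Sum.inr j)) ∈ ({l.get} : Set (Fin l.length → Γ))} with hEdef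
  have hPE : P {ρ | (fun z => ω (τ z) ρ) ∈ E}
      = Measure.pi (fun _ : Fin m ⊕ Fin n => μ) (SGset z0 C x y s m n)
        * (l.map fun g => μ {g}).prod := by
    rw [eventProb P ω μ hw τ hτ E, hEdef,
      piFactor μ (SGset z0 C x y s m n) ({l.get} : Set (Fin l.length → Γ)), piList μ l]
  have hincl : {ρ | (fun z => ω (τ z) ρ) ∈ E}
      ⊆ {ρ | x + y - (2 * C + dist (s • z0) z0)
          ≤ dist (walk ω (m + l.length + n) ρ • z0) z0} := by
    rintro ρ ⟨hg, hwd⟩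
    obtain ⟨hxm, hyn, hgpc⟩ := hg
    have h5 : (fun j : Fin l.length => ω (m + 1 + (j : ℕ)) ρ) = l.get := hwd
    have hmid : blk ω m l.length ρ = s := by
      show (List.ofFn fun i : Fin l.length => ω (m + 1 + (i : ℕ)) ρ).prod = s
      rw [h5, List.ofFn_get, hl]
    have hxm' : x ≤ dist (blk ω 0 m ρ • z0) z0 := hxm
    have hyn' : y ≤ dist (blk ω (m + l.length) n ρ • z0) z0 := hyn
    have hgpc' : gp z0 ((blk ω 0 m ρ)⁻¹ • z0)
        ((s * blk ω (m + l.length) n ρ) • z0) ≤ C := by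
      have h6 : (List.ofFn fun i : Fin m => ω (0 + 1 + (i : ℕ)) ρ).prod = blk ω 0 m ρ := rfl
      exact hgpc
    have hwk : walk ω (m + l.length + n) ρ
        = blk ω 0 m ρ * (s * blk ω (m + l.length) n ρ) := by
      rw [walk_eq_blk, blk_add ω 0 (m + l.length) n, blk_add ω 0 m l.length]
      simp only [Nat.zero_add]
      rw [hmid, mul_assoc]
    simp only [Set.mem_setOf_eq]
    rw [hwk]
    exact geom_main hiso z0 _ _ _ hxm' hyn' hgpc'
  rw [← hPE]
  exact measure_mono hincl

end AuxInsert

end BMS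
namespace BMS

open scoped ENNReal

/-- **Proposition (supermultiplicativity for deviations from above).** If the semigroup
generated by the support of `μ` contains a Schottky set, there are `c > 1` and `p ∈ ℕ`
such that for all `x, y ≥ 0` and `n, m ∈ ℕ`,
`P(d(z0, z_{m+n+p}) ≥ x + y - c) ≥ c⁻¹ P(d(z0,z_m) ≥ x) P(d(z0,z_n) ≥ y)`. -/
theorem insertion_supermultiplicativity
    {X : Type*} [MetricSpace X] {Γ : Type*} [Group Γ] [Countable Γ]
    [MeasurableSpace Γ] [MeasurableSingletonClass Γ] [MulAction Γ X]
    (hiso : IsIsomAction Γ X) (z0 : X)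
    (μ : Measure Γ) [IsProbabilityMeasure μ]
    (hS : ∃ S : Set Γ, S ⊆ (Subsemigroup.closure (measSupport μ) : Set Γ) ∧ IsSchottky z0 S)
    {Ω : Type*} [MeasurableSpace Ω] (P : Measure Ω) [IsProbabilityMeasure P]
    (ω : ℕ → Ω → Γ) (hwalk : IIDWalk P ω μ) :
    ∃ (c : ℝ) (p : ℕ), 1 < c ∧
      ∀ x y : ℝ, 0 ≤ x → 0 ≤ y → ∀ n m : ℕ,
        ENNReal.ofReal c⁻¹ *
            P {ρ | x ≤ dist ((walk ω m ρ) • z0) z0} *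
            P {ρ | y ≤ dist ((walk ω n ρ) • z0) z0} ≤
          P {ρ | x + y - c ≤ dist ((walk ω (m + n + p) ρ) • z0) z0} := by
  classical
  obtain ⟨S, hSsub, hSfin, hSne, C, hCpos, hSch⟩ := hS
  -- extract words for elements of the semigroup closure
  have hword' : ∀ s ∈ Subsemigroup.closure (measSupport μ),
      ∃ l : List Γ, l ≠ [] ∧ (∀ g ∈ l, μ {g} ≠ 0) ∧ l.prod = s := by
    intro s hs
    induction hs using Subsemigroup.closure_induction with
    | mem g hg =>
      refine ⟨[g], by simp, ?_, by simp⟩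
      intro g' hg'
      simp only [List.mem_singleton] at hg'
      subst hg'
      exact hg
    | mul a b ha hb iha ihb =>
      obtain ⟨l1, h11, h12, h13⟩ := iha
      obtain ⟨l2, h21, h22, h23⟩ := ihb
      refine ⟨l1 ++ l2, by simp [h11], ?_, by rw [List.prod_append, h13, h23]⟩
      intro g hg
      rcases List.mem_append.mp hg with h | h
      exacts [h12 g h, h22 g h]
  have hword : ∀ s ∈ S, ∃ l : List Γ, l ≠ [] ∧ (∀ g ∈ l, μ {g} ≠ 0) ∧ l.prod = s :=
    fun s hs => hword' s (hSsub hs)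
  choose! W hWne hWpos hWprod using hword
  obtain ⟨SF, hSFdef⟩ : ∃ SF : Finset Γ, SF = hSfin.toFinset := ⟨_, rfl⟩
  have hmemSF : ∀ s, s ∈ SF ↔ s ∈ S := fun s => by rw [hSFdef]; exact hSfin.mem_toFinset
  obtain ⟨s₀, hs₀S⟩ := hSne
  have hs₀SF : s₀ ∈ SF := (hmemSF s₀).mpr hs₀S
  -- a fixed letter with positive mass
  obtain ⟨g0, hg0mem⟩ : ∃ g0, g0 ∈ W s₀ := ⟨(W s₀).head (hWne s₀ hs₀S), List.head_mem _⟩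
  have hg0 : μ {g0} ≠ 0 := hWpos s₀ hs₀S g0 hg0mem
  have hβ1 : μ {g0} ≤ 1 := prob_le_one
  have hβT : μ {g0} ≠ ⊤ := (lt_of_le_of_lt hβ1 ENNReal.one_lt_top).ne
  -- constants
  obtain ⟨p, hpdef⟩ : ∃ p : ℕ, p = SF.sup fun s => (W s).length := ⟨_, rfl⟩
  have hDh0 : (0 : ℝ) ≤ dist (g0 • z0) z0 := dist_nonneg
  obtain ⟨DS, hDSdef⟩ : ∃ D : ℝ, D = SF.sup' ⟨s₀, hs₀SF⟩ (fun s => dist (s • z0) z0) := ⟨_, rfl⟩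
  have hDSle : ∀ s ∈ SF, dist (s • z0) z0 ≤ DS := by
    intro s hs
    rw [hDSdef]
    exact Finset.le_sup' (fun s => dist (s • z0) z0) hs
  have hDS0 : 0 ≤ DS := le_trans dist_nonneg (hDSle s₀ hs₀SF)
  obtain ⟨αm, hαmdef⟩ : ∃ a : ℝ≥0∞,
      a = SF.inf' ⟨s₀, hs₀SF⟩ (fun s => ((W s).map fun g => μ {g}).prod) := ⟨_, rfl⟩
  have hαmle : ∀ s ∈ SF, αm ≤ ((W s).map fun g => μ {g}).prod := by
    intro s hs
    rw [hαmdef]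
    exact Finset.inf'_le _ hs
  have hαm0 : αm ≠ 0 := by
    rw [hαmdef]
    have : (0 : ℝ≥0∞) < SF.inf' ⟨s₀, hs₀SF⟩ (fun s => ((W s).map fun g => μ {g}).prod) := by
      refine (Finset.lt_inf'_iff _).mpr fun s hs => pos_iff_ne_zero.mpr ?_
      refine List.prod_ne_zero ?_
      intro h0
      rw [List.mem_map] at h0
      obtain ⟨g, hg, hgz⟩ := h0
      exact hWpos s ((hmemSF s).mp hs) g hg hgz
    exact this.ne'
  have hαm1 : αm ≤ 1 := by
    refine le_trans (hαmle s₀ hs₀SF) (listProdLeOne _ ?_)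
    intro a ha
    rw [List.mem_map] at ha
    obtain ⟨g, _, rfl⟩ := ha
    exact prob_le_one
  have hk0 : (SF.card : ℝ≥0∞) ≠ 0 := Nat.cast_ne_zero.mpr (Finset.card_ne_zero_of_mem hs₀SF)
  have hkT : (SF.card : ℝ≥0∞) ≠ ⊤ := ENNReal.natCast_ne_top _
  obtain ⟨δ, hδdef⟩ : ∃ d : ℝ≥0∞, d = (SF.card : ℝ≥0∞)⁻¹ * (μ {g0} ^ p * αm) := ⟨_, rfl⟩
  have hδ0 : δ ≠ 0 := by
    rw [hδdef]
    exact mul_ne_zero (ENNReal.inv_ne_zero.mpr hkT) (mul_ne_zero (pow_ne_zero _ hg0) hαm0)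
  have hδT : δ ≠ ⊤ := by
    rw [hδdef]
    exact ENNReal.mul_ne_top (ENNReal.inv_ne_top.mpr hk0)
      (ENNReal.mul_ne_top (ENNReal.pow_ne_top hβT) (lt_of_le_of_lt hαm1 ENNReal.one_lt_top).ne)
  have hδtR : 0 < δ.toReal := ENNReal.toReal_pos hδ0 hδT
  have hinvδ : 0 < (δ.toReal)⁻¹ := inv_pos.mpr hδtR
  have hpDh : 0 ≤ (p : ℝ) * dist (g0 • z0) z0 := mul_nonneg (Nat.cast_nonneg _) hDh0
  obtain ⟨c, hcdef⟩ : ∃ c : ℝ,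
      c = 2 + (2 * C + DS + (p : ℝ) * dist (g0 • z0) z0) + (δ.toReal)⁻¹ := ⟨_, rfl⟩
  have hc1 : 1 < c := by rw [hcdef]; linarith
  refine ⟨c, p, hc1, ?_⟩
  intro x y hx hy n m
  -- Schottky existence
  have hSchEx : ∀ yy zz : X, ∃ s ∈ S, gp z0 yy (s • zz) ≤ C := by
    intro yy zz
    by_contra hcon
    push_neg at hcon
    have hempty : {s ∈ S | gp z0 yy (s • zz) ≤ C} = ∅ := by
      ext s
      simp only [Set.mem_setOf_eq, Set.mem_empty_iff_false, iff_false, not_and]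
      intro hs hle
      exact absurd hle (not_le.mpr (hcon s hs))
    have h := hSch yy zz
    rw [hempty, Set.ncard_empty] at h
    have hpos : 0 < (S.ncard : ℝ) := by
      have : 0 < S.ncard := (Set.ncard_pos hSfin).mpr ⟨s₀, hs₀S⟩
      exact_mod_cast this
    simp only [Nat.cast_zero] at h
    nlinarith
  -- the per-element bound
  have hstep1 : ∀ s ∈ SF,
      μ {g0} ^ p * αm * Measure.pi (fun _ : Fin m ⊕ Fin n => μ) (SGset z0 C x y s m n)
        ≤ P {ρ | x + y - c ≤ dist (walk ω (m + n + p) ρ • z0) z0} := by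
    intro s hsF
    have hsS : s ∈ S := (hmemSF s).mp hsF
    have hLp : (W s).length ≤ p := by
      rw [hpdef]
      exact Finset.le_sup (f := fun s => (W s).length) hsF
    have hins := insertion_ineq P ω μ hwalk hiso z0 (C := C) (x := x) (y := y) s (W s)
      (hWprod s hsS) m n
    have hrel1 : P {ρ | x + y - (2 * C + dist (s • z0) z0)
        ≤ dist (walk ω (m + (W s).length + n) ρ • z0) z0}
        ≤ P {ρ | x + y - (2 * C + DS)
        ≤ dist (walk ω (m + (W s).length + n) ρ • z0) z0} := by
      refine measure_mono ?_
      intro ρ hρ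
      simp only [Set.mem_setOf_eq] at hρ ⊢
      have hds : dist (s • z0) z0 ≤ DS := hDSle s hsF
      linarith
    have hshift := shift_iter P ω μ hwalk hiso z0 g0 (m + (W s).length + n)
      (x + y - (2 * C + DS)) (p - (W s).length)
    rw [show m + (W s).length + n + (p - (W s).length) = m + n + p from by omega] at hshift
    have hrel2 : P {ρ | x + y - (2 * C + DS)
          - ((p - (W s).length : ℕ) : ℝ) * dist (g0 • z0) z0
        ≤ dist (walk ω (m + n + p) ρ • z0) z0}
        ≤ P {ρ | x + y - c ≤ dist (walk ω (m + n + p) ρ • z0) z0} := by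
      refine measure_mono ?_
      intro ρ hρ
      simp only [Set.mem_setOf_eq] at hρ ⊢
      have hcast : ((p - (W s).length : ℕ) : ℝ) ≤ (p : ℝ) := Nat.cast_le.mpr (Nat.sub_le _ _)
      have hmul : ((p - (W s).length : ℕ) : ℝ) * dist (g0 • z0) z0
          ≤ (p : ℝ) * dist (g0 • z0) z0 := mul_le_mul_of_nonneg_right hcast hDh0
      rw [hcdef]
      linarith
    have hpow : μ {g0} ^ p ≤ μ {g0} ^ (p - (W s).length) := by
      calc μ {g0} ^ p = μ {g0} ^ (p - (W s).length) * μ {g0} ^ (W s).length := by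
            rw [← pow_add]
            congr 1
            omega
        _ ≤ μ {g0} ^ (p - (W s).length) * 1 := mul_le_mul_right (pow_le_one' hβ1 _) _
        _ = μ {g0} ^ (p - (W s).length) := mul_one _
    calc μ {g0} ^ p * αm * Measure.pi (fun _ : Fin m ⊕ Fin n => μ) (SGset z0 C x y s m n)
        ≤ μ {g0} ^ (p - (W s).length) * ((W s).map fun g => μ {g}).prod
            * Measure.pi (fun _ : Fin m ⊕ Fin n => μ) (SGset z0 C x y s m n) := by
          gcongr
          exact hαmle s hsF
      _ = μ {g0} ^ (p - (W s).length)
            * (Measure.pi (fun _ : Fin m ⊕ Fin n => μ) (SGset z0 C x y s m n)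
              * ((W s).map fun g => μ {g}).prod) := by ring
      _ ≤ μ {g0} ^ (p - (W s).length)
            * P {ρ | x + y - (2 * C + dist (s • z0) z0)
                ≤ dist (walk ω (m + (W s).length + n) ρ • z0) z0} :=
          mul_le_mul_right hins _
      _ ≤ μ {g0} ^ (p - (W s).length)
            * P {ρ | x + y - (2 * C + DS)
                ≤ dist (walk ω (m + (W s).length + n) ρ • z0) z0} :=
          mul_le_mul_right hrel1 _
      _ ≤ P {ρ | x + y - (2 * C + DS)
            - ((p - (W s).length : ℕ) : ℝ) * dist (g0 • z0) z0
            ≤ dist (walk ω (m + n + p) ρ • z0) z0} := hshift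
      _ ≤ P {ρ | x + y - c ≤ dist (walk ω (m + n + p) ρ • z0) z0} := hrel2
  -- covering by the Schottky sets
  have hcover : {w : Fin m ⊕ Fin n → Γ | (fun i => w (Sum.inl i)) ∈ distSet z0 x m ∧
      (fun i => w (Sum.inr i)) ∈ distSet z0 y n}
      ⊆ ⋃ s ∈ SF, SGset z0 C x y s m n := by
    rintro w ⟨h1, h2⟩
    obtain ⟨s, hsS, hgp⟩ := hSchEx
      (((List.ofFn fun i : Fin m => w (Sum.inl i)).prod)⁻¹ • z0)
      (((List.ofFn fun i : Fin n => w (Sum.inr i)).prod) • z0)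
    rw [← mul_smul] at hgp
    exact Set.mem_biUnion ((hmemSF s).mpr hsS) ⟨h1, h2, hgp⟩
  have hpair := pairProb P ω μ hwalk z0 x y m n
  have hsum : Measure.pi (fun _ : Fin m ⊕ Fin n => μ)
      {w : Fin m ⊕ Fin n → Γ | (fun i => w (Sum.inl i)) ∈ distSet z0 x m ∧
        (fun i => w (Sum.inr i)) ∈ distSet z0 y n}
      ≤ ∑ s ∈ SF, Measure.pi (fun _ : Fin m ⊕ Fin n => μ) (SGset z0 C x y s m n) :=
    le_trans (measure_mono hcover) (measure_biUnion_finset_le _ _)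
  have hbig : μ {g0} ^ p * αm * (P {ρ | x ≤ dist ((walk ω m ρ) • z0) z0}
      * P {ρ | y ≤ dist ((walk ω n ρ) • z0) z0})
      ≤ (SF.card : ℝ≥0∞) * P {ρ | x + y - c ≤ dist ((walk ω (m + n + p) ρ) • z0) z0} := by
    calc μ {g0} ^ p * αm * (P {ρ | x ≤ dist ((walk ω m ρ) • z0) z0}
        * P {ρ | y ≤ dist ((walk ω n ρ) • z0) z0})
        = μ {g0} ^ p * αm * Measure.pi (fun _ : Fin m ⊕ Fin n => μ)
            {w : Fin m ⊕ Fin n → Γ | (fun i => w (Sum.inl i)) ∈ distSet z0 x m ∧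
              (fun i => w (Sum.inr i)) ∈ distSet z0 y n} := by rw [hpair]
      _ ≤ μ {g0} ^ p * αm * ∑ s ∈ SF, Measure.pi (fun _ : Fin m ⊕ Fin n => μ)
            (SGset z0 C x y s m n) := mul_le_mul_right hsum _
      _ = ∑ s ∈ SF, μ {g0} ^ p * αm
            * Measure.pi (fun _ : Fin m ⊕ Fin n => μ) (SGset z0 C x y s m n) := by
          rw [Finset.mul_sum]
      _ ≤ ∑ _s ∈ SF, P {ρ | x + y - c ≤ dist (walk ω (m + n + p) ρ • z0) z0} :=
          Finset.sum_le_sum hstep1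
      _ = (SF.card : ℝ≥0∞) * P {ρ | x + y - c ≤ dist (walk ω (m + n + p) ρ • z0) z0} := by
          rw [Finset.sum_const, nsmul_eq_mul]
  have hPT : δ * (P {ρ | x ≤ dist ((walk ω m ρ) • z0) z0}
      * P {ρ | y ≤ dist ((walk ω n ρ) • z0) z0})
      ≤ P {ρ | x + y - c ≤ dist ((walk ω (m + n + p) ρ) • z0) z0} := by
    calc δ * (P {ρ | x ≤ dist ((walk ω m ρ) • z0) z0}
        * P {ρ | y ≤ dist ((walk ω n ρ) • z0) z0})
        = (SF.card : ℝ≥0∞)⁻¹ * (μ {g0} ^ p * αm * (P {ρ | x ≤ dist ((walk ω m ρ) • z0) z0}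
            * P {ρ | y ≤ dist ((walk ω n ρ) • z0) z0})) := by rw [hδdef]; ring
      _ ≤ (SF.card : ℝ≥0∞)⁻¹ * ((SF.card : ℝ≥0∞)
            * P {ρ | x + y - c ≤ dist ((walk ω (m + n + p) ρ) • z0) z0}) :=
          mul_le_mul_right hbig _
      _ = P {ρ | x + y - c ≤ dist ((walk ω (m + n + p) ρ) • z0) z0} := by
          rw [← mul_assoc, ENNReal.inv_mul_cancel hk0 hkT, one_mul]
  have hcδ : ENNReal.ofReal c⁻¹ ≤ δ := by
    have h1 : (δ.toReal)⁻¹ ≤ c := by rw [hcdef]; linarith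
    have h2 : c⁻¹ ≤ δ.toReal := by
      have h3 := inv_anti₀ hinvδ h1
      rwa [inv_inv] at h3
    calc ENNReal.ofReal c⁻¹ ≤ ENNReal.ofReal δ.toReal := ENNReal.ofReal_le_ofReal h2
      _ = δ := ENNReal.ofReal_toReal hδT
  calc ENNReal.ofReal c⁻¹ * P {ρ | x ≤ dist ((walk ω m ρ) • z0) z0}
      * P {ρ | y ≤ dist ((walk ω n ρ) • z0) z0}
      ≤ δ * P {ρ | x ≤ dist ((walk ω m ρ) • z0) z0}
        * P {ρ | y ≤ dist ((walk ω n ρ) • z0) z0} :=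
        mul_le_mul_left (mul_le_mul_left hcδ _) _
    _ = δ * (P {ρ | x ≤ dist ((walk ω m ρ) • z0) z0}
        * P {ρ | y ≤ dist ((walk ω n ρ) • z0) z0}) := by rw [mul_assoc]
    _ ≤ P {ρ | x + y - c ≤ dist ((walk ω (m + n + p) ρ) • z0) z0} := hPT

end BMS
end
end

section
/- (Geometric Berger–Wang equality, non-elementary case.) Let X be a geodesic Gromov-hyperbolic metric space and let B be a non-elementary subset of Isom(X). Then ℓ_∞(B) = ℓ(B), where ℓ_∞(B) := limsup_{k→∞} sup_{g∈B^k} ℓ(g)/k and ℓ(B) is the asymptotic joint displacement. -/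
open MeasureTheory ProbabilityTheory Filter Topology Pointwise

noncomputable section

namespace BMS

section BW

variable {X : Type*} [MetricSpace X] {Γ : Type*} [Group Γ] [MulAction Γ X]

lemma gp_comm (x y z : X) : gp x y z = gp x z y := by
  unfold gp; rw [dist_comm y z]; ring

lemma gp_nonneg (x y z : X) : 0 ≤ gp x y z := by
  have h := dist_triangle y x z
  unfold gp; rw [dist_comm x z] at h; linarith

lemma gp_le_left (x y z : X) : gp x y z ≤ dist y x := by
  have h := dist_triangle z y x
  unfold gp; rw [dist_comm z y] at h; linarith

lemma gp_self (p y : X) : gp p y y = dist y p := by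
  unfold gp; simp

lemma gp_lip (x y z z' : X) : gp x y z' ≤ gp x y z + dist z z' := by
  have h1 := dist_triangle z' z x
  have h2 := dist_triangle y z' z
  unfold gp; rw [dist_comm z' z] at h1; rw [dist_comm z' z] at h2; linarith

/-- The Gromov product identity: `(x,z)_y + (y,z)_x = d(x,y)`. -/
lemma gp_add (x y z : X) : gp y x z + gp x y z = dist x y := by
  unfold gp; rw [dist_comm y x, dist_comm z y, dist_comm z x]; ring

/-- Usable form of hyperbolicity: `min((a,c)_p, (c,b)_p) ≤ (a,b)_p + δ`. -/
lemma hyp4 {δ : ℝ} (hyp : HypWith δ X) (p a b c : X) :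
    min (gp p a c) (gp p c b) ≤ gp p a b + δ := by
  have h := hyp p a b c
  rw [gp_comm p a c]; linarith

section chain

variable {δ K : ℝ}

/-- Chain lemma, claim A. -/
lemma chainA (hδ : 0 < δ) (hyp : HypWith δ X) (hK : 0 ≤ K) (x : ℕ → X) (n : ℕ)
    (hJ : ∀ i, i + 2 ≤ n → gp (x (i+1)) (x i) (x (i+2)) ≤ K)
    (hS : ∀ i, i + 1 ≤ n → 2*K + 4*δ + 1 ≤ dist (x i) (x (i+1))) :
    ∀ j, 1 ≤ j → j + 1 ≤ n → gp (x j) (x 0) (x (j+1)) ≤ K + δ := by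
  intro j hj1 hjn
  induction j with
  | zero => omega
  | succ j ih =>
    rcases Nat.eq_zero_or_pos j with rfl | hjpos
    · have := hJ 0 (by omega)
      norm_num at this ⊢
      linarith
    · have hprev : gp (x j) (x 0) (x (j+1)) ≤ K + δ := ih (by omega) (by omega)
      have hd : dist (x 0) (x j) + dist (x j) (x (j+1)) - 2*(K+δ) ≤ dist (x 0) (x (j+1)) := by
        unfold gp at hprev
        simp only [dist_comm] at hprev ⊢
        linarith
      have hbig : K + 3*δ + 1 ≤ gp (x (j+1)) (x 0) (x j) := by
        have hs := hS j (by omega)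
        unfold gp
        simp only [dist_comm] at hs hd ⊢
        linarith
      have h4 := hyp (x (j+1)) (x (j+2)) (x j) (x 0)
      have hjun : gp (x (j+1)) (x (j+2)) (x j) ≤ K := by
        rw [gp_comm]; exact hJ j (by omega)
      by_contra hcon
      push_neg at hcon
      have hcon' : K + δ < gp (x (j+1)) (x 0) (x (j+2)) := by
        have e : j + 1 + 1 = j + 2 := rfl
        rw [e] at hcon; exact hcon
      have hmin : K + δ < min (gp (x (j+1)) (x 0) (x (j+2))) (gp (x (j+1)) (x 0) (x j)) :=
        lt_min_iff.mpr ⟨hcon', by linarith⟩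
      have hfin : K + δ - δ < gp (x (j+1)) (x (j+2)) (x j) := by
        calc K + δ - δ < min (gp (x (j+1)) (x 0) (x (j+2))) (gp (x (j+1)) (x 0) (x j)) - δ := by
              linarith
          _ ≤ _ := h4
      linarith

/-- One-step distance estimate along a chain. -/
lemma chainStep (hδ : 0 < δ) (hyp : HypWith δ X) (hK : 0 ≤ K) (x : ℕ → X) (n : ℕ)
    (hJ : ∀ i, i + 2 ≤ n → gp (x (i+1)) (x i) (x (i+2)) ≤ K)
    (hS : ∀ i, i + 1 ≤ n → 2*K + 4*δ + 1 ≤ dist (x i) (x (i+1))) :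
    ∀ j, j + 1 ≤ n →
      dist (x 0) (x j) + dist (x j) (x (j+1)) - 2*(K+δ) ≤ dist (x 0) (x (j+1)) := by
  intro j hjn
  rcases Nat.eq_zero_or_pos j with rfl | hjpos
  · simp only [dist_self, zero_add]
    norm_num
    linarith [dist_nonneg (x := x 0) (y := x 1)]
  · have := chainA hδ hyp hK x n hJ hS j hjpos hjn
    unfold gp at this
    simp only [dist_comm] at this ⊢
    linarith

/-- Cumulative lower bound for uniform-step chains. -/
lemma chainCumUnif (hδ : 0 < δ) (hyp : HypWith δ X) (hK : 0 ≤ K) (x : ℕ → X) (n : ℕ) (c : ℝ)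
    (hJ : ∀ i, i + 2 ≤ n → gp (x (i+1)) (x i) (x (i+2)) ≤ K)
    (hS : ∀ i, i + 1 ≤ n → 2*K + 4*δ + 1 ≤ dist (x i) (x (i+1)))
    (hc : ∀ i, i + 1 ≤ n → c ≤ dist (x i) (x (i+1))) :
    ∀ j, 1 ≤ j → j ≤ n → (j:ℝ) * (c - 2*(K+δ)) + 2*(K+δ) ≤ dist (x 0) (x j) := by
  intro j hj1 hjn
  induction j with
  | zero => omega
  | succ j ih =>
    rcases Nat.eq_zero_or_pos j with rfl | hjpos
    · have := hc 0 (by omega)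
      push_cast
      norm_num at this ⊢
      linarith
    · have h1 := ih (by omega) (by omega)
      have h2 := chainStep hδ hyp hK x n hJ hS j (by omega)
      have h3 := hc j (by omega)
      push_cast
      push_cast at h1
      linarith

/-- Reversed chain claim A. -/
lemma chainA2 (hδ : 0 < δ) (hyp : HypWith δ X) (hK : 0 ≤ K) (x : ℕ → X) (n : ℕ)
    (hJ : ∀ i, i + 2 ≤ n → gp (x (i+1)) (x i) (x (i+2)) ≤ K)
    (hS : ∀ i, i + 1 ≤ n → 2*K + 4*δ + 1 ≤ dist (x i) (x (i+1))) :
    ∀ j k, j + 1 ≤ k → k ≤ n → gp (x (j+1)) (x k) (x j) ≤ K + δ := by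
  intro j k hjk hkn
  rcases eq_or_lt_of_le hjk with heq | hlt
  · subst heq
    have h0 : gp (x (j+1)) (x (j+1)) (x j) = 0 := by
      rw [gp_comm]; unfold gp; simp
    rw [h0]; linarith
  · have hJ' : ∀ i, i + 2 ≤ k →
        gp ((fun t => x (k - t)) (i+1)) ((fun t => x (k - t)) i) ((fun t => x (k - t)) (i+2)) ≤ K := by
      intro i hik
      obtain ⟨m, e1, e2, e3⟩ : ∃ m, k - (i+1) = m+1 ∧ k - i = m+2 ∧ k - (i+2) = m :=
        ⟨k - i - 2, by omega, by omega, by omega⟩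
      show gp (x (k - (i+1))) (x (k - i)) (x (k - (i+2))) ≤ K
      rw [e1, e2, e3, gp_comm]
      exact hJ m (by omega)
    have hS' : ∀ i, i + 1 ≤ k →
        2*K + 4*δ + 1 ≤ dist ((fun t => x (k - t)) i) ((fun t => x (k - t)) (i+1)) := by
      intro i hik
      obtain ⟨m, e1, e2⟩ : ∃ m, k - i = m+1 ∧ k - (i+1) = m := ⟨k - i - 1, by omega, by omega⟩
      show 2*K + 4*δ + 1 ≤ dist (x (k - i)) (x (k - (i+1)))
      rw [e1, e2, dist_comm]
      exact hS m (by omega)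
    have := chainA hδ hyp hK (fun t => x (k - t)) k hJ' hS' (k - j - 1) (by omega) (by omega)
    have e0 : k - (0:ℕ) = k := by omega
    have e1 : k - (k - j - 1) = j + 1 := by omega
    have e2 : k - (k - j - 1 + 1) = j := by omega
    simpa only [e0, e1, e2] using this

/-- Shifted chain claim A. -/
lemma chainA_shift (hδ : 0 < δ) (hyp : HypWith δ X) (hK : 0 ≤ K) (x : ℕ → X) (n : ℕ)
    (hJ : ∀ i, i + 2 ≤ n → gp (x (i+1)) (x i) (x (i+2)) ≤ K)
    (hS : ∀ i, i + 1 ≤ n → 2*K + 4*δ + 1 ≤ dist (x i) (x (i+1))) :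
    ∀ i j, i < j → j + 1 ≤ n → gp (x j) (x i) (x (j+1)) ≤ K + δ := by
  intro i j hij hjn
  have hJ' : ∀ t, t + 2 ≤ n - i →
      gp ((fun t => x (i + t)) (t+1)) ((fun t => x (i + t)) t) ((fun t => x (i + t)) (t+2)) ≤ K := by
    intro t ht
    show gp (x (i + (t+1))) (x (i + t)) (x (i + (t+2))) ≤ K
    have e1 : i + (t+1) = (i+t) + 1 := by omega
    have e2 : i + (t+2) = (i+t) + 2 := by omega
    rw [e1, e2]
    exact hJ (i+t) (by omega)
  have hS' : ∀ t, t + 1 ≤ n - i →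
      2*K + 4*δ + 1 ≤ dist ((fun t => x (i + t)) t) ((fun t => x (i + t)) (t+1)) := by
    intro t ht
    show 2*K + 4*δ + 1 ≤ dist (x (i + t)) (x (i + (t+1)))
    have e1 : i + (t+1) = (i+t) + 1 := by omega
    rw [e1]
    exact hS (i+t) (by omega)
  have := chainA hδ hyp hK (fun t => x (i + t)) (n - i) hJ' hS' (j - i) (by omega) (by omega)
  have e0 : i + (0:ℕ) = i := by omega
  have e1 : i + (j - i) = j := by omega
  have e2 : i + (j - i + 1) = j + 1 := by omega
  simpa only [e0, e1, e2] using this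

/-- Thin chain: Gromov product of two chain points at an intermediate chain point. -/
lemma chainC3 (hδ : 0 < δ) (hyp : HypWith δ X) (hK : 0 ≤ K) (x : ℕ → X) (n : ℕ)
    (hJ : ∀ i, i + 2 ≤ n → gp (x (i+1)) (x i) (x (i+2)) ≤ K)
    (hS : ∀ i, i + 1 ≤ n → 2*K + 4*δ + 1 ≤ dist (x i) (x (i+1))) :
    ∀ i j k, i < j → j < k → k ≤ n → gp (x j) (x i) (x k) ≤ K + 2*δ := by
  intro i j k hij hjk hkn
  have h1 : gp (x j) (x i) (x (j+1)) ≤ K + δ :=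
    chainA_shift hδ hyp hK x n hJ hS i j hij (by omega)
  rcases eq_or_lt_of_le (show j + 1 ≤ k by omega) with heq | hlt
  · rw [← heq]; linarith
  · have h2 : gp (x (j+1)) (x k) (x j) ≤ K + δ := chainA2 hδ hyp hK x n hJ hS j k (by omega) hkn
    have h3 : K + 3*δ + 1 ≤ gp (x j) (x k) (x (j+1)) := by
      have hid := gp_add (x (j+1)) (x j) (x k)
      have hs := hS j (by omega)
      rw [gp_comm (x j) (x k) (x (j+1))]
      rw [gp_comm (x (j+1)) (x k) (x j)] at h2
      unfold gp at hid ⊢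
      unfold gp at h2
      simp only [dist_comm] at hid h2 hs ⊢
      linarith
    have h4 := hyp (x j) (x i) (x (j+1)) (x k)
    by_contra hcon
    push_neg at hcon
    have hmin : K + 2*δ < min (gp (x j) (x k) (x i)) (gp (x j) (x k) (x (j+1))) :=
      lt_min_iff.mpr ⟨by rw [gp_comm (x j) (x k) (x i)]; exact hcon, by linarith⟩
    have hfin : K + 2*δ - δ < gp (x j) (x i) (x (j+1)) := by
      calc K + 2*δ - δ < min (gp (x j) (x k) (x i)) (gp (x j) (x k) (x (j+1))) - δ := by linarith
        _ ≤ _ := h4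
    linarith

end chain

end BW

end BMS
namespace BMS

section BW2

variable {X : Type*} [MetricSpace X] {Γ : Type*} [Group Γ] [MulAction Γ X]

/-- Displacement of `u` at the basepoint. -/
def nm (z0 : X) (u : Γ) : ℝ := dist (u • z0) z0

variable (z0 : X)

lemma nm_nonneg (u : Γ) : 0 ≤ nm z0 u := dist_nonneg

lemma nm_one : nm (z0 : X) (1 : Γ) = 0 := by simp [nm]

/-- `stableLength` as an infimum over positive powers. -/
lemma stable_le (g : Γ) (n : ℕ) :
    stableLength z0 g ≤ nm z0 (g ^ (n+1)) / ((n:ℝ)+1) := by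
  have hb : BddBelow (Set.range fun n : ℕ => dist ((g ^ (n + 1)) • z0) z0 / (n + 1)) := by
    refine ⟨0, ?_⟩
    rintro r ⟨m, rfl⟩
    positivity
  unfold stableLength nm
  exact ciInf_le hb n

lemma stable_nonneg (g : Γ) : 0 ≤ stableLength z0 g := by
  unfold stableLength
  refine le_ciInf fun n => by positivity

lemma stable_le_nm (g : Γ) : stableLength z0 g ≤ nm z0 g := by
  have := stable_le z0 g 0
  simpa [nm] using this

lemma stable_ge (g : Γ) (c : ℝ)
    (h : ∀ n : ℕ, c * ((n:ℝ)+1) ≤ nm z0 (g ^ (n+1))) : c ≤ stableLength z0 g := by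
  unfold stableLength
  refine le_ciInf fun n => ?_
  have hn : (0:ℝ) < (n:ℝ) + 1 := by positivity
  rw [le_div_iff₀ hn]
  have h2 := h n
  unfold nm at h2
  push_cast
  linarith

lemma le_stable_mul (g : Γ) (n : ℕ) (hn : 1 ≤ n) :
    (n:ℝ) * stableLength z0 g ≤ nm z0 (g ^ n) := by
  obtain ⟨m, rfl⟩ : ∃ m, n = m + 1 := ⟨n - 1, by omega⟩
  have h := stable_le z0 g m
  have hm : (0:ℝ) < (m:ℝ) + 1 := by positivity
  rw [le_div_iff₀ hm] at h
  push_cast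
  linarith

variable (hiso : IsIsomAction Γ X)
include hiso

lemma gp_isom (u : Γ) (x y z : X) : gp (u • x) (u • y) (u • z) = gp x y z := by
  unfold gp; rw [hiso u y x, hiso u z x, hiso u y z]

lemma nm_inv (u : Γ) : nm z0 u⁻¹ = nm z0 u := by
  unfold nm
  have h := hiso u (u⁻¹ • z0) z0
  rw [smul_inv_smul] at h
  rw [← h, dist_comm]

lemma dist_orbit (u v : Γ) : dist (u • z0) (v • z0) = nm z0 (u⁻¹ * v) := by
  unfold nm
  have h := hiso u⁻¹ (u • z0) (v • z0)
  rw [inv_smul_smul, ← mul_smul] at h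
  rw [← h, dist_comm]

lemma nm_mul_le (u v : Γ) : nm z0 (u * v) ≤ nm z0 u + nm z0 v := by
  have h := dist_triangle ((u * v) • z0) (u • z0) z0
  have h2 : dist ((u * v) • z0) (u • z0) = nm z0 v := by
    rw [dist_comm, dist_orbit z0 hiso u (u * v)]
    congr 1; group
  rw [h2] at h
  unfold nm at *; linarith

lemma nm_mul_ge (u v : Γ) : nm z0 u - nm z0 v ≤ nm z0 (u * v) := by
  have h := nm_mul_le z0 hiso (u * v) v⁻¹
  rw [nm_inv z0 hiso] at h
  have e : u * v * v⁻¹ = u := by group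
  rw [e] at h; linarith

lemma nm_pow_le (u : Γ) : ∀ j : ℕ, nm z0 (u ^ j) ≤ (j:ℝ) * nm z0 u := by
  intro j
  induction j with
  | zero => simp [nm]
  | succ j ih =>
    have h := nm_mul_le z0 hiso (u ^ j) u
    rw [← pow_succ] at h
    push_cast
    nlinarith [nm_nonneg z0 u]

lemma gp_inv_mul (u v : Γ) :
    gp z0 (u⁻¹ • z0) (v • z0) = (nm z0 u + nm z0 v - nm z0 (u * v)) / 2 := by
  have h1 := nm_inv z0 hiso u
  have h2 := dist_orbit z0 hiso u⁻¹ v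
  rw [inv_inv] at h2
  unfold gp nm at *
  rw [h2, h1]

lemma gp_smul_pair (u a b : Γ) :
    gp z0 ((u * a) • z0) ((u * b) • z0) = gp (u⁻¹ • z0) (a • z0) (b • z0) := by
  have h := gp_isom hiso u (u⁻¹ • z0) (a • z0) (b • z0)
  rw [smul_inv_smul, ← mul_smul, ← mul_smul] at h
  exact h

end BW2

end BMS
namespace BMS

section BW3

variable {X : Type*} [MetricSpace X] {Γ : Type*} [Group Γ] [MulAction Γ X]
variable {δ : ℝ} {z0 : X}

lemma gp_orbit (hiso : IsIsomAction Γ X) (z0 : X) (u a b : Γ) :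
    gp (u • z0) ((u * a) • z0) ((u * b) • z0) = gp z0 (a • z0) (b • z0) := by
  have h := gp_isom hiso u z0 (a • z0) (b • z0)
  rw [← mul_smul, ← mul_smul] at h
  exact h

/-- The orbit chain of powers of `E = e^k₀` satisfies the chain hypotheses. -/
lemma powchain (hiso : IsIsomAction Γ X)
    (e : Γ) (k₀ : ℕ) (M₀ : ℝ)
    (hjun : gp z0 ((e^k₀) • z0) (((e^k₀)⁻¹) • z0) ≤ M₀)
    (hstep : 2*M₀ + 4*δ + 1 ≤ nm z0 (e^k₀)) (a : ℕ) :
    (∀ i, i + 2 ≤ a → gp ((fun t => (e^(k₀*t)) • z0) (i+1)) ((fun t => (e^(k₀*t)) • z0) i)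
        ((fun t => (e^(k₀*t)) • z0) (i+2)) ≤ M₀) ∧
    (∀ i, i + 1 ≤ a → 2*M₀ + 4*δ + 1 ≤
        dist ((fun t => (e^(k₀*t)) • z0) i) ((fun t => (e^(k₀*t)) • z0) (i+1))) := by
  constructor
  · intro i _
    show gp ((e^(k₀*(i+1))) • z0) ((e^(k₀*i)) • z0) ((e^(k₀*(i+2))) • z0) ≤ M₀
    have e1 : e^(k₀*i) = e^(k₀*(i+1)) * (e^k₀)⁻¹ := by
      rw [show k₀*(i+1) = k₀*i + k₀ by ring, pow_add, mul_inv_cancel_right]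
    have e2 : e^(k₀*(i+2)) = e^(k₀*(i+1)) * e^k₀ := by
      rw [show k₀*(i+2) = k₀*(i+1) + k₀ by ring, pow_add]
    have e3 : (e^(k₀*(i+1))) • z0 = (e^(k₀*(i+1)) * 1) • z0 := by rw [mul_one]
    rw [e1, e2, e3, show e^(k₀*(i+1)) * (e^k₀)⁻¹ = e^(k₀*(i+1)) * 1 * (e^k₀)⁻¹ by rw [mul_one],
       show e^(k₀*(i+1)) * e^k₀ = e^(k₀*(i+1)) * 1 * e^k₀ by rw [mul_one]]
    rw [gp_orbit hiso z0 (e^(k₀*(i+1)) * 1) ((e^k₀)⁻¹) (e^k₀)]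
    rw [gp_comm]
    exact hjun
  · intro i _
    show 2*M₀ + 4*δ + 1 ≤ dist ((e^(k₀*i)) • z0) ((e^(k₀*(i+1))) • z0)
    rw [dist_orbit z0 hiso]
    have e1 : (e^(k₀*i))⁻¹ * e^(k₀*(i+1)) = e^k₀ := by
      rw [show k₀*(i+1) = k₀*i + k₀ by ring, pow_add, inv_mul_cancel_left]
    rw [e1]
    exact hstep

/-- Lower bound on the displacement of powers of `E`. -/
lemma powP1 (hδ : 0 < δ) (hyp : HypWith δ X) (hiso : IsIsomAction Γ X)
    (e : Γ) (k₀ : ℕ) (M₀ : ℝ) (hM₀ : 0 ≤ M₀)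
    (hjun : gp z0 ((e^k₀) • z0) (((e^k₀)⁻¹) • z0) ≤ M₀)
    (hstep : 2*M₀ + 4*δ + 1 ≤ nm z0 (e^k₀)) :
    ∀ n : ℕ, 1 ≤ n → (n:ℝ) * (nm z0 (e^k₀) - 2*(M₀+δ)) ≤ nm z0 (e^(k₀*n)) := by
  intro n hn
  obtain ⟨hJ, hS⟩ := powchain hiso e k₀ M₀ hjun hstep n
  have hcum := chainCumUnif hδ hyp hM₀ (fun t => (e^(k₀*t)) • z0) n (nm z0 (e^k₀)) hJ hS
    (fun i hi => by
      show nm z0 (e^k₀) ≤ dist ((e^(k₀*i)) • z0) ((e^(k₀*(i+1))) • z0)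
      rw [dist_orbit z0 hiso, show (e^(k₀*i))⁻¹ * e^(k₀*(i+1)) = e^k₀ by
        rw [show k₀*(i+1) = k₀*i + k₀ by ring, pow_add, inv_mul_cancel_left]])
    n hn le_rfl
  have e0 : (fun t => (e^(k₀*t)) • z0) 0 = z0 := by simp
  have hd : dist ((fun t => (e^(k₀*t)) • z0) 0) ((fun t => (e^(k₀*t)) • z0) n)
      = nm z0 (e^(k₀*n)) := by
    rw [e0]; show dist z0 ((e^(k₀*n)) • z0) = _; rw [dist_comm]; rfl
  rw [hd] at hcum
  nlinarith [hδ, hM₀]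

/-- Forward Gromov products grow linearly along the orbit of `E`. -/
lemma powP3 (hδ : 0 < δ) (hyp : HypWith δ X) (hiso : IsIsomAction Γ X)
    (e : Γ) (k₀ : ℕ) (M₀ : ℝ) (hM₀ : 0 ≤ M₀)
    (hjun : gp z0 ((e^k₀) • z0) (((e^k₀)⁻¹) • z0) ≤ M₀)
    (hstep : 2*M₀ + 4*δ + 1 ≤ nm z0 (e^k₀)) :
    ∀ n a : ℕ, 1 ≤ n → n ≤ a →
      (n:ℝ) * (nm z0 (e^k₀) - 2*(M₀+δ)) - (M₀ + 2*δ) ≤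
        gp z0 ((e^(k₀*n)) • z0) ((e^(k₀*a)) • z0) := by
  intro n a hn hna
  have hp1 := powP1 hδ hyp hiso e k₀ M₀ hM₀ hjun hstep n hn
  rcases eq_or_lt_of_le hna with rfl | hlt
  · rw [gp_self]
    have : dist ((e^(k₀*n)) • z0) z0 = nm z0 (e^(k₀*n)) := rfl
    rw [this]
    linarith
  · obtain ⟨hJ, hS⟩ := powchain hiso e k₀ M₀ hjun hstep a
    have hc3 := chainC3 hδ hyp hM₀ (fun t => (e^(k₀*t)) • z0) a hJ hS 0 n a
      (by omega) hlt le_rfl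
    have e0 : e^(k₀*0) = 1 := by rw [mul_zero, pow_zero]
    rw [e0, one_smul] at hc3
    -- hc3 : gp ((e^(k₀*n)) • z0) z0 ((e^(k₀*a)) • z0) ≤ M₀ + 2δ
    have hid := gp_add ((e^(k₀*n)) • z0) z0 ((e^(k₀*a)) • z0)
    -- gp z0 x z + gp x z0 z = dist x z0  with x := (e^(k₀*n)) • z0, z := ...
    have hdist : dist ((e^(k₀*n)) • z0) z0 = nm z0 (e^(k₀*n)) := rfl
    rw [hdist] at hid
    linarith

/-- Version of `powP3` for arbitrary powers `e^k`, `k ≥ k₀(n+1)`. -/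
lemma powP4 (hδ : 0 < δ) (hyp : HypWith δ X) (hiso : IsIsomAction Γ X)
    (e : Γ) (k₀ : ℕ) (hk₀ : 1 ≤ k₀) (M₀ : ℝ) (hM₀ : 0 ≤ M₀)
    (hjun : gp z0 ((e^k₀) • z0) (((e^k₀)⁻¹) • z0) ≤ M₀)
    (hstep : 2*M₀ + 4*δ + 1 ≤ nm z0 (e^k₀)) :
    ∀ n k : ℕ, 1 ≤ n → k₀*(n+1) ≤ k →
      (n:ℝ) * (nm z0 (e^k₀) - 2*(M₀+δ)) - (M₀ + 2*δ) - (k₀:ℝ) * nm z0 e ≤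
        gp z0 ((e^(k₀*n)) • z0) ((e^k) • z0) := by
  intro n k hn hk
  set a := k / k₀ with ha
  have hdm := Nat.div_add_mod k k₀
  rw [← ha] at hdm
  have hna : n ≤ a := by
    rw [ha, Nat.le_div_iff_mul_le (show 0 < k₀ by omega)]
    calc n * k₀ ≤ (n+1) * k₀ := Nat.mul_le_mul_right _ (by omega)
    _ = k₀ * (n+1) := mul_comm _ _
    _ ≤ k := hk
  have hp3 := powP3 hδ hyp hiso e k₀ M₀ hM₀ hjun hstep n a hn hna
  have hlip := gp_lip z0 ((e^(k₀*n)) • z0) ((e^k) • z0) ((e^(k₀*a)) • z0)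
  rw [dist_comm] at hlip
  have hdd : dist ((e^(k₀*a)) • z0) ((e^k) • z0) ≤ (k₀:ℝ) * nm z0 e := by
    rw [dist_orbit z0 hiso]
    have e1 : (e^(k₀*a))⁻¹ * e^k = e^(k - k₀*a) := by
      have h2 : k = k₀*a + (k - k₀*a) := by omega
      calc (e^(k₀*a))⁻¹ * e^k = (e^(k₀*a))⁻¹ * e^(k₀*a + (k - k₀*a)) := by rw [← h2]
      _ = e^(k - k₀*a) := by rw [pow_add, inv_mul_cancel_left]
    rw [e1]
    calc nm z0 (e^(k - k₀*a)) ≤ ((k - k₀*a : ℕ):ℝ) * nm z0 e := nm_pow_le z0 hiso e _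
    _ ≤ (k₀:ℝ) * nm z0 e := by
        apply mul_le_mul_of_nonneg_right _ (nm_nonneg z0 e)
        have : k - k₀*a < k₀ := by
          have h3 := Nat.mod_lt k (show 0 < k₀ by omega)
          omega
        exact_mod_cast le_of_lt this
  linarith

end BW3

end BMS
namespace BMS

section BW4

variable {X : Type*} [MetricSpace X] {Γ : Type*} [Group Γ] [MulAction Γ X]
variable {δ : ℝ} {z0 : X}

set_option maxHeartbeats 1000000 in
/-- Mixed products of powers of two "independent directions" are uniformly bounded. -/
lemma mix (hδ : 0 < δ) (hyp : HypWith δ X) (hiso : IsIsomAction Γ X)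
    (e f : Γ) (k₀ l₀ : ℕ) (hk₀ : 1 ≤ k₀) (hl₀ : 1 ≤ l₀) (M₀e M₀f M₁ : ℝ)
    (hM₀e : 0 ≤ M₀e) (hM₀f : 0 ≤ M₀f) (hM₁ : 0 ≤ M₁)
    (hjune : gp z0 ((e^k₀) • z0) (((e^k₀)⁻¹) • z0) ≤ M₀e)
    (hstepe : 2*M₀e + 4*δ + 1 ≤ nm z0 (e^k₀))
    (hjunf : gp z0 ((f^l₀) • z0) (((f^l₀)⁻¹) • z0) ≤ M₀f)
    (hstepf : 2*M₀f + 4*δ + 1 ≤ nm z0 (f^l₀))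
    (hfreq : ∀ K : ℕ, ∃ k, K ≤ k ∧ gp z0 ((e^k) • z0) ((f^k) • z0) ≤ M₁) :
    ∃ A, 0 ≤ A ∧ ∀ n m : ℕ, 1 ≤ n → 1 ≤ m →
      gp z0 ((e^(k₀*n)) • z0) ((f^(l₀*m)) • z0) ≤ A := by
  have hnme : 0 ≤ nm z0 e := nm_nonneg z0 e
  have hnmf : 0 ≤ nm z0 f := nm_nonneg z0 f
  have hk₀nm : 0 ≤ (k₀:ℝ) * nm z0 e := mul_nonneg (by positivity) hnme
  have hl₀nm : 0 ≤ (l₀:ℝ) * nm z0 f := mul_nonneg (by positivity) hnmf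
  set n₀ : ℕ := ⌈M₁ + 4*δ + M₀e + (k₀:ℝ) * nm z0 e⌉₊ + 1 with hn₀
  set m₀ : ℕ := ⌈M₁ + 4*δ + M₀f + (l₀:ℝ) * nm z0 f⌉₊ + 1 with hm₀
  have hn₀R : M₁ + 4*δ + M₀e + (k₀:ℝ) * nm z0 e + 1 ≤ (n₀:ℝ) := by
    rw [hn₀]; push_cast
    linarith [Nat.le_ceil (M₁ + 4*δ + M₀e + (k₀:ℝ) * nm z0 e)]
  have hm₀R : M₁ + 4*δ + M₀f + (l₀:ℝ) * nm z0 f + 1 ≤ (m₀:ℝ) := by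
    rw [hm₀]; push_cast
    linarith [Nat.le_ceil (M₁ + 4*δ + M₀f + (l₀:ℝ) * nm z0 f)]
  refine ⟨max (M₁ + 2*δ) (max (((k₀*n₀ : ℕ):ℝ) * nm z0 e) (((l₀*m₀ : ℕ):ℝ) * nm z0 f)),
    le_max_of_le_left (by linarith), ?_⟩
  intro n m hn hm
  by_cases hsmalln : n < n₀
  · refine le_max_of_le_right (le_max_of_le_left ?_)
    have h1 : gp z0 ((e^(k₀*n)) • z0) ((f^(l₀*m)) • z0) ≤ dist ((e^(k₀*n)) • z0) z0 :=
      gp_le_left _ _ _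
    have h2 : nm z0 (e^(k₀*n)) ≤ ((k₀*n : ℕ):ℝ) * nm z0 e := nm_pow_le z0 hiso e _
    have h3 : ((k₀*n : ℕ):ℝ) * nm z0 e ≤ ((k₀*n₀ : ℕ):ℝ) * nm z0 e := by
      apply mul_le_mul_of_nonneg_right _ hnme
      exact_mod_cast Nat.mul_le_mul_left k₀ (by omega)
    have h4 : dist ((e^(k₀*n)) • z0) z0 = nm z0 (e^(k₀*n)) := rfl
    linarith
  by_cases hsmallm : m < m₀
  · refine le_max_of_le_right (le_max_of_le_right ?_)
    rw [gp_comm]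
    have h1 : gp z0 ((f^(l₀*m)) • z0) ((e^(k₀*n)) • z0) ≤ dist ((f^(l₀*m)) • z0) z0 :=
      gp_le_left _ _ _
    have h2 : nm z0 (f^(l₀*m)) ≤ ((l₀*m : ℕ):ℝ) * nm z0 f := nm_pow_le z0 hiso f _
    have h3 : ((l₀*m : ℕ):ℝ) * nm z0 f ≤ ((l₀*m₀ : ℕ):ℝ) * nm z0 f := by
      apply mul_le_mul_of_nonneg_right _ hnmf
      exact_mod_cast Nat.mul_le_mul_left l₀ (by omega)
    have h4 : dist ((f^(l₀*m)) • z0) z0 = nm z0 (f^(l₀*m)) := rfl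
    linarith
  -- main case
  refine le_max_of_le_left ?_
  push_neg at hsmalln hsmallm
  obtain ⟨k, hkge, hksmall⟩ := hfreq (max (k₀*(n+1)) (l₀*(m+1)))
  have hP4e := powP4 hδ hyp hiso e k₀ hk₀ M₀e hM₀e hjune hstepe n k hn
    (le_trans (le_max_left _ _) hkge)
  have hP4f := powP4 hδ hyp hiso f l₀ hl₀ M₀f hM₀f hjunf hstepf m k hm
    (le_trans (le_max_right _ _) hkge)
  have hnn₀ : (n₀:ℝ) ≤ (n:ℝ) := by exact_mod_cast hsmalln
  have hmm₀ : (m₀:ℝ) ≤ (m:ℝ) := by exact_mod_cast hsmallm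
  have hprodE : 0 ≤ (n:ℝ) * (nm z0 (e^k₀) - 2*(M₀e+δ) - 1) :=
    mul_nonneg (by positivity) (by linarith)
  have hprodF : 0 ≤ (m:ℝ) * (nm z0 (f^l₀) - 2*(M₀f+δ) - 1) :=
    mul_nonneg (by positivity) (by linarith)
  have hlargeE : M₁ + 2*δ < gp z0 ((e^(k₀*n)) • z0) ((e^k) • z0) := by
    nlinarith [hP4e, hn₀R, hnn₀, hprodE]
  have hlargeF : M₁ + 2*δ < gp z0 ((f^(l₀*m)) • z0) ((f^k) • z0) := by
    nlinarith [hP4f, hm₀R, hmm₀, hprodF]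
  have h1 : gp z0 ((e^k) • z0) ((f^(l₀*m)) • z0) ≤ M₁ + δ := by
    by_contra hc
    push_neg at hc
    have hmin : M₁ + δ < min (gp z0 ((e^k) • z0) ((f^(l₀*m)) • z0))
        (gp z0 ((f^(l₀*m)) • z0) ((f^k) • z0)) :=
      lt_min_iff.mpr ⟨hc, by linarith⟩
    linarith [hyp4 hyp z0 ((e^k) • z0) ((f^k) • z0) ((f^(l₀*m)) • z0), hksmall]
  have h2 : gp z0 ((f^(l₀*m)) • z0) ((e^(k₀*n)) • z0) ≤ M₁ + 2*δ := by
    by_contra hc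
    push_neg at hc
    have hmin : M₁ + 2*δ < min (gp z0 ((f^(l₀*m)) • z0) ((e^(k₀*n)) • z0))
        (gp z0 ((e^(k₀*n)) • z0) ((e^k) • z0)) :=
      lt_min_iff.mpr ⟨hc, hlargeE⟩
    have h4 := hyp4 hyp z0 ((f^(l₀*m)) • z0) ((e^k) • z0) ((e^(k₀*n)) • z0)
    rw [gp_comm z0 ((f^(l₀*m)) • z0) ((e^k) • z0)] at h4
    linarith [h1]
  rw [gp_comm]
  exact h2
end BW4

end BMS
namespace BMS

section BW5

variable {X : Type*} [MetricSpace X] {Γ : Type*} [Group Γ] [MulAction Γ X]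
variable {δ : ℝ} {z0 : X}

lemma gp_orbit_pair (hiso : IsIsomAction Γ X) (z0 : X) (u v : Γ) :
    gp z0 (u • z0) (v • z0) = (nm z0 u + nm z0 v - nm z0 (u⁻¹*v)) / 2 := by
  unfold gp
  rw [dist_orbit z0 hiso u v]
  rfl

/-- Transfer of smallness of Gromov products along a large one. -/
lemma gp_transfer (hδ : 0 < δ) (hyp : HypWith δ X) (p q r : X) (T₁ T₂ : ℝ)
    (hbig : T₁ ≤ gp z0 q r) (hsmall : gp z0 p r ≤ T₂) (hgap : T₂ + δ < T₁) :
    gp z0 p q ≤ T₂ + δ := by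
  by_contra hc
  push_neg at hc
  have hmin : T₂ + δ < min (gp z0 p q) (gp z0 q r) := lt_min_iff.mpr ⟨hc, by linarith⟩
  linarith [hyp4 hyp z0 p r q]

/-- Selection of a Schottky element adapted to `w`. -/
lemma survivor (hδ : 0 < δ) (hyp : HypWith δ X) (C : ℝ)
    (S₁ S₂ S₃ S₄ : Γ) (w : Γ)
    (p12 : gp z0 (S₁ • z0) (S₂ • z0) ≤ C - δ)
    (p14 : gp z0 (S₁ • z0) (S₄ • z0) ≤ C - δ)
    (p32 : gp z0 (S₃ • z0) (S₂ • z0) ≤ C - δ)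
    (p34 : gp z0 (S₃ • z0) (S₄ • z0) ≤ C - δ)
    (q12 : gp z0 (S₁⁻¹ • z0) (S₂⁻¹ • z0) ≤ C - δ)
    (q13 : gp z0 (S₁⁻¹ • z0) (S₃⁻¹ • z0) ≤ C - δ)
    (q42 : gp z0 (S₄⁻¹ • z0) (S₂⁻¹ • z0) ≤ C - δ)
    (q43 : gp z0 (S₄⁻¹ • z0) (S₃⁻¹ • z0) ≤ C - δ) :
    ∃ s : Γ, (s = S₁ ∨ s = S₂ ∨ s = S₃ ∨ s = S₄) ∧
      gp z0 (w⁻¹ • z0) (s • z0) ≤ C ∧ gp z0 (w • z0) (s⁻¹ • z0) ≤ C := by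
  have excl1 : ∀ u v : Γ, gp z0 (u • z0) (v • z0) ≤ C - δ →
      C < gp z0 (w⁻¹ • z0) (u • z0) → gp z0 (w⁻¹ • z0) (v • z0) ≤ C := by
    intro u v huv hu
    by_contra hcv
    push_neg at hcv
    have h4 := hyp4 hyp z0 (u • z0) (v • z0) (w⁻¹ • z0)
    have hmin : C < min (gp z0 (u • z0) (w⁻¹ • z0)) (gp z0 (w⁻¹ • z0) (v • z0)) :=
      lt_min_iff.mpr ⟨by rw [gp_comm]; exact hu, hcv⟩
    linarith
  have excl2 : ∀ u v : Γ, gp z0 (u⁻¹ • z0) (v⁻¹ • z0) ≤ C - δ →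
      C < gp z0 (w • z0) (u⁻¹ • z0) → gp z0 (w • z0) (v⁻¹ • z0) ≤ C := by
    intro u v huv hu
    by_contra hcv
    push_neg at hcv
    have h4 := hyp4 hyp z0 (u⁻¹ • z0) (v⁻¹ • z0) (w • z0)
    have hmin : C < min (gp z0 (u⁻¹ • z0) (w • z0)) (gp z0 (w • z0) (v⁻¹ • z0)) :=
      lt_min_iff.mpr ⟨by rw [gp_comm]; exact hu, hcv⟩
    linarith
  -- first coordinate: the set of pool elements with large (w⁻¹, ·) is contained in a
  -- start class
  have hb1 : (gp z0 (w⁻¹ • z0) (S₂ • z0) ≤ C ∧ gp z0 (w⁻¹ • z0) (S₄ • z0) ≤ C) ∨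
      (gp z0 (w⁻¹ • z0) (S₁ • z0) ≤ C ∧ gp z0 (w⁻¹ • z0) (S₃ • z0) ≤ C) := by
    by_cases h1 : C < gp z0 (w⁻¹ • z0) (S₁ • z0)
    · exact Or.inl ⟨excl1 S₁ S₂ p12 h1, excl1 S₁ S₄ p14 h1⟩
    by_cases h3 : C < gp z0 (w⁻¹ • z0) (S₃ • z0)
    · exact Or.inl ⟨excl1 S₃ S₂ p32 h3, excl1 S₃ S₄ p34 h3⟩
    push_neg at h1 h3
    exact Or.inr ⟨h1, h3⟩
  have hb2 : (gp z0 (w • z0) (S₂⁻¹ • z0) ≤ C ∧ gp z0 (w • z0) (S₃⁻¹ • z0) ≤ C) ∨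
      (gp z0 (w • z0) (S₁⁻¹ • z0) ≤ C ∧ gp z0 (w • z0) (S₄⁻¹ • z0) ≤ C) := by
    by_cases h1 : C < gp z0 (w • z0) (S₁⁻¹ • z0)
    · exact Or.inl ⟨excl2 S₁ S₂ q12 h1, excl2 S₁ S₃ q13 h1⟩
    by_cases h4 : C < gp z0 (w • z0) (S₄⁻¹ • z0)
    · exact Or.inl ⟨excl2 S₄ S₂ q42 h4, excl2 S₄ S₃ q43 h4⟩
    push_neg at h1 h4
    exact Or.inr ⟨h1, h4⟩
  rcases hb1 with ⟨h2f, h4f⟩ | ⟨h1f, h3f⟩ <;> rcases hb2 with ⟨h2b, h3b⟩ | ⟨h1b, h4b⟩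
  · exact ⟨S₂, Or.inr (Or.inl rfl), h2f, h2b⟩
  · exact ⟨S₄, Or.inr (Or.inr (Or.inr rfl)), h4f, h4b⟩
  · exact ⟨S₃, Or.inr (Or.inr (Or.inl rfl)), h3f, h3b⟩
  · exact ⟨S₁, Or.inl rfl, h1f, h1b⟩

/-- Lower bound for the stable length of `w * s` when `w` and `s` are aligned. -/
lemma tau_lower (hδ : 0 < δ) (hyp : HypWith δ X) (hiso : IsIsomAction Γ X)
    (C : ℝ) (hC : 0 ≤ C) (w s : Γ)
    (h1 : gp z0 (w⁻¹ • z0) (s • z0) ≤ C) (h2 : gp z0 (w • z0) (s⁻¹ • z0) ≤ C)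
    (hw : 2*C + 4*δ + 1 ≤ nm z0 w) (hs : 2*C + 4*δ + 1 ≤ nm z0 s) :
    nm z0 w + nm z0 s - 4*(C+δ) ≤ stableLength z0 (w*s) := by
  apply stable_ge
  intro n
  set x : ℕ → X := fun t => (((w*s)^(t/2)) * w^(t%2)) • z0 with hx
  have hxe : ∀ a : ℕ, x (2*a) = ((w*s)^a) • z0 := by
    intro a
    show (((w*s)^((2*a)/2)) * w^((2*a)%2)) • z0 = _
    have e1 : (2*a)/2 = a := by omega
    have e2 : (2*a)%2 = 0 := by omega
    rw [e1, e2, pow_zero, mul_one]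
  have hxo : ∀ a : ℕ, x (2*a+1) = ((w*s)^a * w) • z0 := by
    intro a
    show (((w*s)^((2*a+1)/2)) * w^((2*a+1)%2)) • z0 = _
    have e1 : (2*a+1)/2 = a := by omega
    have e2 : (2*a+1)%2 = 1 := by omega
    rw [e1, e2, pow_one]
  have hJ : ∀ i, i + 2 ≤ 2*(n+1) → gp (x (i+1)) (x i) (x (i+2)) ≤ C := by
    intro i hi
    rcases Nat.even_or_odd' i with ⟨a, rfl | rfl⟩
    · have e2 : 2*a + 2 = 2*(a+1) := by ring
      rw [e2, hxe a, hxo a, hxe (a+1)]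
      have e3 : (w*s)^a = ((w*s)^a * w) * w⁻¹ := by group
      have e4 : (w*s)^(a+1) = ((w*s)^a * w) * s := by rw [pow_succ]; group
      have horb := gp_orbit hiso z0 ((w*s)^a * w) w⁻¹ s
      rw [← e3, ← e4] at horb
      rw [horb]
      exact h1
    · have e2 : 2*a + 1 + 1 = 2*(a+1) := by ring
      have e3 : 2*a + 1 + 2 = 2*(a+1) + 1 := by ring
      rw [e2, e3, hxe (a+1), hxo a, hxo (a+1)]
      have e4 : (w*s)^a * w = ((w*s)^(a+1)) * s⁻¹ := by rw [pow_succ]; group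
      have e5 : (w*s)^(a+1) * w = ((w*s)^(a+1)) * w := rfl
      rw [e4, e5, gp_orbit hiso z0 ((w*s)^(a+1)) s⁻¹ w]
      rw [gp_comm]
      exact h2
  have hS : ∀ i, i + 1 ≤ 2*(n+1) → 2*C + 4*δ + 1 ≤ dist (x i) (x (i+1)) := by
    intro i hi
    rcases Nat.even_or_odd' i with ⟨a, rfl | rfl⟩
    · rw [hxe a, hxo a, dist_orbit z0 hiso]
      have e1 : ((w*s)^a)⁻¹ * ((w*s)^a * w) = w := by group
      rw [e1]; exact hw
    · have e2 : 2*a + 1 + 1 = 2*(a+1) := by ring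
      rw [e2, hxo a, hxe (a+1), dist_orbit z0 hiso]
      have e1 : ((w*s)^a * w)⁻¹ * ((w*s)^(a+1)) = s := by rw [pow_succ]; group
      rw [e1]; exact hs
  have hcum : ∀ m : ℕ, 1 ≤ m → m ≤ n+1 →
      (m:ℝ)*(nm z0 w + nm z0 s) - 4*(m:ℝ)*(C+δ) ≤ dist (x 0) (x (2*m)) := by
    intro m hm1 hmn
    induction m with
    | zero => omega
    | succ m ih =>
      rcases Nat.eq_zero_or_pos m with rfl | hmpos
      · have hst1 := chainStep hδ hyp hC x (2*(n+1)) hJ hS 1 (by omega)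
        have hd0 : dist (x 0) (x 1) = nm z0 w := by
          have h0 : x 0 = ((w*s)^0) • z0 := hxe 0
          have h1' : x 1 = ((w*s)^0 * w) • z0 := hxo 0
          rw [h0, h1', dist_orbit z0 hiso]
          congr 1; group
        have hd1 : dist (x 1) (x 2) = nm z0 s := by
          have h1' : x 1 = ((w*s)^0 * w) • z0 := hxo 0
          have h2' : x 2 = ((w*s)^1) • z0 := hxe 1
          rw [h1', h2', dist_orbit z0 hiso]
          congr 1; group
        have e1 : (2:ℕ)*1 = 2 := by norm_num
        rw [e1]
        rw [hd0, hd1] at hst1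
        have hd00 : dist (x 0) (x 0) = 0 := dist_self _
        push_cast
        have hst0 : dist (x 0) (x 1) = nm z0 w := hd0
        nlinarith [hst1, dist_nonneg (x := x 0) (y := x 1)]
      · have ih' := ih (by omega) (by omega)
        have hst1 := chainStep hδ hyp hC x (2*(n+1)) hJ hS (2*m) (by omega)
        have hst2 := chainStep hδ hyp hC x (2*(n+1)) hJ hS (2*m+1) (by omega)
        have hd1 : dist (x (2*m)) (x (2*m+1)) = nm z0 w := by
          rw [hxe m, hxo m, dist_orbit z0 hiso]
          congr 1; group
        have hd2 : dist (x (2*m+1)) (x (2*m+1+1)) = nm z0 s := by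
          have e2 : 2*m + 1 + 1 = 2*(m+1) := by ring
          rw [e2, hxo m, hxe (m+1), dist_orbit z0 hiso]
          have e1 : ((w*s)^m * w)⁻¹ * ((w*s)^(m+1)) = s := by rw [pow_succ]; group
          rw [e1]
        have e3 : 2*(m+1) = 2*m+1+1 := by ring
        rw [e3]
        rw [hd1] at hst1
        rw [hd2] at hst2
        push_cast
        push_cast at ih'
        linarith
  have hfin := hcum (n+1) (by omega) le_rfl
  have hx0 : x 0 = z0 := by
    have h0 : x 0 = ((w*s)^0) • z0 := hxe 0
    rw [h0, pow_zero, one_smul]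
  have hxn : dist (x 0) (x (2*(n+1))) = nm z0 ((w*s)^(n+1)) := by
    rw [hx0, hxe (n+1), dist_comm]
    rfl
  rw [hxn] at hfin
  push_cast at hfin ⊢
  nlinarith [hfin]

end BW5

end BMS
namespace BMS

section BW6

variable {X : Type*} [MetricSpace X] {Γ : Type*} [Group Γ] [MulAction Γ X]
variable {δ : ℝ} {z0 : X}

set_option maxHeartbeats 2000000 in
/-- Main geometric lemma: appending a suitable bounded Schottky-type element to any
isometry `w` of large displacement produces an element of the semigroup with stable
length comparable to the displacement of `w`. -/
lemma main_geom (hδ : 0 < δ) (hyp : HypWith δ X) (hiso : IsIsomAction Γ X)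
    (B : Set Γ) (g h : Γ) (p q : ℕ) (hp : 1 ≤ p) (hq : 1 ≤ q)
    (hgB : g ∈ B ^ p) (hhB : h ∈ B ^ q)
    (hgrowg : ∀ c : ℝ, ∃ N : ℕ, ∀ k, N ≤ k → c ≤ nm z0 (g^k))
    (hgrowh : ∀ c : ℝ, ∃ N : ℕ, ∀ k, N ≤ k → c ≤ nm z0 (h^k))
    (hfg : ∃ M, 0 ≤ M ∧ ∀ K : ℕ, ∃ k, K ≤ k ∧ gp z0 ((g^k) • z0) (((g⁻¹)^k) • z0) ≤ M)
    (hfh : ∃ M, 0 ≤ M ∧ ∀ K : ℕ, ∃ k, K ≤ k ∧ gp z0 ((h^k) • z0) (((h⁻¹)^k) • z0) ≤ M)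
    (hfmix : ∀ e f : Γ, (e = g ∨ e = g⁻¹) → (f = h ∨ f = h⁻¹) →
      ∃ M, 0 ≤ M ∧ ∀ K : ℕ, ∃ k, K ≤ k ∧ gp z0 ((e^k) • z0) ((f^k) • z0) ≤ M) :
    ∃ (mstar : ℕ) (c₀ r₀ : ℝ), 1 ≤ mstar ∧ 0 ≤ c₀ ∧
      ∀ w : Γ, r₀ ≤ nm z0 w → ∃ (s : Γ) (mm : ℕ), 1 ≤ mm ∧ mm ≤ mstar ∧ s ∈ B ^ mm ∧
        nm z0 w - c₀ ≤ stableLength z0 (w*s) := by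
  classical
  obtain ⟨Mg, hMg0, hMgfreq⟩ := hfg
  obtain ⟨Mh, hMh0, hMhfreq⟩ := hfh
  -- choose good powers k₀, l₀
  obtain ⟨N₁, hN₁⟩ := hgrowg (2*Mg + 4*δ + 1)
  obtain ⟨k₀, hk₀ge, hk₀jun⟩ := hMgfreq (max N₁ 1)
  have hk₀1 : 1 ≤ k₀ := le_trans (le_max_right _ _) hk₀ge
  have hjung : gp z0 ((g^k₀) • z0) (((g^k₀)⁻¹) • z0) ≤ Mg := by
    rw [← inv_pow]; exact hk₀jun
  have hstepg : 2*Mg + 4*δ + 1 ≤ nm z0 (g^k₀) := hN₁ k₀ (le_trans (le_max_left _ _) hk₀ge)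
  obtain ⟨N₂, hN₂⟩ := hgrowh (2*Mh + 4*δ + 1)
  obtain ⟨l₀, hl₀ge, hl₀jun⟩ := hMhfreq (max N₂ 1)
  have hl₀1 : 1 ≤ l₀ := le_trans (le_max_right _ _) hl₀ge
  have hjunh : gp z0 ((h^l₀) • z0) (((h^l₀)⁻¹) • z0) ≤ Mh := by
    rw [← inv_pow]; exact hl₀jun
  have hsteph : 2*Mh + 4*δ + 1 ≤ nm z0 (h^l₀) := hN₂ l₀ (le_trans (le_max_left _ _) hl₀ge)
  -- junction conditions for the inverses
  have hjungi : gp z0 (((g⁻¹)^k₀) • z0) ((((g⁻¹)^k₀)⁻¹) • z0) ≤ Mg := by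
    rw [inv_pow, inv_inv, gp_comm]; exact hjung
  have hstepgi : 2*Mg + 4*δ + 1 ≤ nm z0 ((g⁻¹)^k₀) := by
    rw [inv_pow, nm_inv z0 hiso]; exact hstepg
  have hjunhi : gp z0 (((h⁻¹)^l₀) • z0) ((((h⁻¹)^l₀)⁻¹) • z0) ≤ Mh := by
    rw [inv_pow, inv_inv, gp_comm]; exact hjunh
  have hstephi : 2*Mh + 4*δ + 1 ≤ nm z0 ((h⁻¹)^l₀) := by
    rw [inv_pow, nm_inv z0 hiso]; exact hsteph
  -- the four mixed bounds
  obtain ⟨M1, hM10, hfr1⟩ := hfmix g h (Or.inl rfl) (Or.inl rfl)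
  obtain ⟨M2, hM20, hfr2⟩ := hfmix g h⁻¹ (Or.inl rfl) (Or.inr rfl)
  obtain ⟨M3, hM30, hfr3⟩ := hfmix g⁻¹ h (Or.inr rfl) (Or.inl rfl)
  obtain ⟨M4, hM40, hfr4⟩ := hfmix g⁻¹ h⁻¹ (Or.inr rfl) (Or.inr rfl)
  obtain ⟨A1, hA10, hmx1⟩ := mix hδ hyp hiso g h k₀ l₀ hk₀1 hl₀1 Mg Mh M1 hMg0 hMh0 hM10
    hjung hstepg hjunh hsteph hfr1
  obtain ⟨A2, hA20, hmx2⟩ := mix hδ hyp hiso g h⁻¹ k₀ l₀ hk₀1 hl₀1 Mg Mh M2 hMg0 hMh0 hM20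
    hjung hstepg hjunhi hstephi hfr2
  obtain ⟨A3, hA30, hmx3⟩ := mix hδ hyp hiso g⁻¹ h k₀ l₀ hk₀1 hl₀1 Mg Mh M3 hMg0 hMh0 hM30
    hjungi hstepgi hjunh hsteph hfr3
  obtain ⟨A4, hA40, hmx4⟩ := mix hδ hyp hiso g⁻¹ h⁻¹ k₀ l₀ hk₀1 hl₀1 Mg Mh M4 hMg0 hMh0 hM40
    hjungi hstepgi hjunhi hstephi hfr4
  set A := max (max A1 A2) (max A3 A4) with hA
  have hA0 : 0 ≤ A := le_trans hA10 (le_trans (le_max_left _ _) (le_max_left _ _))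
  -- the scale
  set Λ : ℝ := 4*A + 20*δ + 4 with hΛ
  set N : ℕ := ⌈Λ⌉₊ + 1 with hNdef
  have hN1 : 1 ≤ N := by omega
  have hNΛ : Λ ≤ (N:ℝ) := by
    rw [hNdef]; push_cast; linarith [Nat.le_ceil Λ]
  set G := g^(k₀*N) with hG
  set H := h^(l₀*N) with hH
  -- the four basic cross bounds at scale N
  have bGH : gp z0 (G • z0) (H • z0) ≤ A := by
    refine le_trans (hmx1 N N hN1 hN1) ?_
    exact le_trans (le_max_left _ _) (le_max_left _ _)
  have bGHi : gp z0 (G • z0) (H⁻¹ • z0) ≤ A := by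
    have := hmx2 N N hN1 hN1
    rw [inv_pow] at this
    rw [hG, hH]
    refine le_trans this (le_trans (le_max_right _ _) (le_max_left _ _))
  have bGiH : gp z0 (G⁻¹ • z0) (H • z0) ≤ A := by
    have := hmx3 N N hN1 hN1
    rw [inv_pow] at this
    rw [hG, hH]
    refine le_trans this (le_trans (le_max_left _ _) (le_max_right _ _))
  have bGiHi : gp z0 (G⁻¹ • z0) (H⁻¹ • z0) ≤ A := by
    have := hmx4 N N hN1 hN1
    rw [inv_pow, inv_pow] at this
    rw [hG, hH]
    refine le_trans this (le_trans (le_max_right _ _) (le_max_right _ _))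
  -- norms of G and H
  have ha : Λ ≤ nm z0 G := by
    have h1 := powP1 hδ hyp hiso g k₀ Mg hMg0 hjung hstepg N hN1
    have h2 : (N:ℝ)*1 ≤ (N:ℝ)*(nm z0 (g^k₀) - 2*(Mg+δ)) := by
      apply mul_le_mul_of_nonneg_left _ (by positivity)
      linarith
    rw [hG]
    nlinarith [h1, h2, hNΛ]
  have hb : Λ ≤ nm z0 H := by
    have h1 := powP1 hδ hyp hiso h l₀ Mh hMh0 hjunh hsteph N hN1
    have h2 : (N:ℝ)*1 ≤ (N:ℝ)*(nm z0 (h^l₀) - 2*(Mh+δ)) := by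
      apply mul_le_mul_of_nonneg_left _ (by positivity)
      linarith
    rw [hH]
    nlinarith [h1, h2, hNΛ]
  -- norms of products
  have hnGH : nm z0 G + nm z0 H - 2*A ≤ nm z0 (G*H) := by
    have := gp_inv_mul z0 hiso G H
    linarith [bGiH, this ▸ bGiH]
  have hnHG : nm z0 G + nm z0 H - 2*A ≤ nm z0 (H*G) := by
    have heq := gp_inv_mul z0 hiso H G
    have hcomm : gp z0 (H⁻¹ • z0) (G • z0) ≤ A := by rw [gp_comm]; exact bGHi
    rw [heq] at hcomm
    linarith
  -- the eight pool cross bounds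
  have hnmGHinv : nm z0 ((G*H)⁻¹) = nm z0 (G*H) := nm_inv z0 hiso _
  have hnmHGinv : nm z0 ((H*G)⁻¹) = nm z0 (H*G) := nm_inv z0 hiso _
  have p14 : gp z0 (G • z0) ((H*G) • z0) ≤ A + δ := by
    have hbig : nm z0 H - A ≤ gp z0 ((H*G) • z0) (H • z0) := by
      have heq := gp_orbit_pair hiso z0 (H*G) H
      have e1 : (H*G)⁻¹ * H = G⁻¹ := by group
      rw [e1, nm_inv z0 hiso] at heq
      rw [heq]
      linarith
    exact gp_transfer hδ hyp (G • z0) ((H*G) • z0) (H • z0) (nm z0 H - A) A hbig bGH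
      (by linarith)
  have p32 : gp z0 ((G*H) • z0) (H • z0) ≤ A + δ := by
    rw [gp_comm]
    have hbig : nm z0 G - A ≤ gp z0 ((G*H) • z0) (G • z0) := by
      have heq := gp_orbit_pair hiso z0 (G*H) G
      have e1 : (G*H)⁻¹ * G = H⁻¹ := by group
      rw [e1, nm_inv z0 hiso] at heq
      rw [heq]
      linarith
    have hsmall : gp z0 (H • z0) (G • z0) ≤ A := by rw [gp_comm]; exact bGH
    exact gp_transfer hδ hyp (H • z0) ((G*H) • z0) (G • z0) (nm z0 G - A) A hbig hsmall
      (by linarith)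
  have p34 : gp z0 ((G*H) • z0) ((H*G) • z0) ≤ A + 2*δ := by
    rw [gp_comm]
    have hbig : nm z0 G - A ≤ gp z0 ((G*H) • z0) (G • z0) := by
      have heq := gp_orbit_pair hiso z0 (G*H) G
      have e1 : (G*H)⁻¹ * G = H⁻¹ := by group
      rw [e1, nm_inv z0 hiso] at heq
      rw [heq]
      linarith
    have hsmall : gp z0 ((H*G) • z0) (G • z0) ≤ A + δ := by rw [gp_comm]; exact p14
    have := gp_transfer hδ hyp ((H*G) • z0) ((G*H) • z0) (G • z0) (nm z0 G - A) (A + δ)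
      hbig hsmall (by linarith)
    linarith
  have q13 : gp z0 (G⁻¹ • z0) ((G*H)⁻¹ • z0) ≤ A + δ := by
    rw [mul_inv_rev]
    have hbig : nm z0 H - A ≤ gp z0 ((H⁻¹*G⁻¹) • z0) (H⁻¹ • z0) := by
      have heq := gp_orbit_pair hiso z0 (H⁻¹*G⁻¹) H⁻¹
      have e1 : (H⁻¹*G⁻¹)⁻¹ * H⁻¹ = G := by group
      have e2 : nm z0 (H⁻¹*G⁻¹) = nm z0 (G*H) := by
        rw [← mul_inv_rev]; exact nm_inv z0 hiso _
      rw [e1, e2, nm_inv z0 hiso] at heq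
      rw [heq]
      linarith
    exact gp_transfer hδ hyp (G⁻¹ • z0) ((H⁻¹*G⁻¹) • z0) (H⁻¹ • z0) (nm z0 H - A) A
      hbig bGiHi (by linarith)
  have q42 : gp z0 ((H*G)⁻¹ • z0) (H⁻¹ • z0) ≤ A + δ := by
    rw [mul_inv_rev, gp_comm]
    have hbig : nm z0 G - A ≤ gp z0 ((G⁻¹*H⁻¹) • z0) (G⁻¹ • z0) := by
      have heq := gp_orbit_pair hiso z0 (G⁻¹*H⁻¹) G⁻¹
      have e1 : (G⁻¹*H⁻¹)⁻¹ * G⁻¹ = H := by group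
      have e2 : nm z0 (G⁻¹*H⁻¹) = nm z0 (H*G) := by
        rw [← mul_inv_rev]; exact nm_inv z0 hiso _
      rw [e1, e2, nm_inv z0 hiso] at heq
      rw [heq]
      linarith
    have hsmall : gp z0 (H⁻¹ • z0) (G⁻¹ • z0) ≤ A := by rw [gp_comm]; exact bGiHi
    exact gp_transfer hδ hyp (H⁻¹ • z0) ((G⁻¹*H⁻¹) • z0) (G⁻¹ • z0) (nm z0 G - A) A
      hbig hsmall (by linarith)
  have q43 : gp z0 ((H*G)⁻¹ • z0) ((G*H)⁻¹ • z0) ≤ A + 2*δ := by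
    rw [mul_inv_rev, mul_inv_rev]
    have hbig : nm z0 H - A ≤ gp z0 ((H⁻¹*G⁻¹) • z0) (H⁻¹ • z0) := by
      have heq := gp_orbit_pair hiso z0 (H⁻¹*G⁻¹) H⁻¹
      have e1 : (H⁻¹*G⁻¹)⁻¹ * H⁻¹ = G := by group
      have e2 : nm z0 (H⁻¹*G⁻¹) = nm z0 (G*H) := by
        rw [← mul_inv_rev]; exact nm_inv z0 hiso _
      rw [e1, e2, nm_inv z0 hiso] at heq
      rw [heq]
      linarith
    have hsmall : gp z0 ((G⁻¹*H⁻¹) • z0) (H⁻¹ • z0) ≤ A + δ := by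
      have := q42
      rw [mul_inv_rev, gp_comm] at this
      rw [gp_comm]
      exact this
    have := gp_transfer hδ hyp ((G⁻¹*H⁻¹) • z0) ((H⁻¹*G⁻¹) • z0) (H⁻¹ • z0)
      (nm z0 H - A) (A + δ) hbig hsmall (by linarith)
    linarith
  -- memberships
  have hmemG : G ∈ B ^ (p*(k₀*N)) := by
    have h1 : g^(k₀*N) ∈ (B^p)^(k₀*N) := Set.pow_mem_pow hgB
    rw [← pow_mul] at h1
    rw [hG]
    exact h1
  have hmemH : H ∈ B ^ (q*(l₀*N)) := by
    have h1 : h^(l₀*N) ∈ (B^q)^(l₀*N) := Set.pow_mem_pow hhB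
    rw [← pow_mul] at h1
    rw [hH]
    exact h1
  have hmemGH : G*H ∈ B ^ (p*(k₀*N) + q*(l₀*N)) := by
    rw [pow_add]; exact Set.mul_mem_mul hmemG hmemH
  have hmemHG : H*G ∈ B ^ (q*(l₀*N) + p*(k₀*N)) := by
    rw [pow_add]; exact Set.mul_mem_mul hmemH hmemG
  -- final data
  set C := A + 3*δ with hC
  have hC0 : 0 ≤ C := by rw [hC]; linarith
  have hmG1 : 1 ≤ p*(k₀*N) := Nat.one_le_iff_ne_zero.mpr
    (Nat.mul_ne_zero (by omega) (Nat.mul_ne_zero (by omega) (by omega)))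
  have hmH1 : 1 ≤ q*(l₀*N) := Nat.one_le_iff_ne_zero.mpr
    (Nat.mul_ne_zero (by omega) (Nat.mul_ne_zero (by omega) (by omega)))
  -- norm lower bounds for the pool, in the final form
  have hsG : 2*C + 4*δ + 1 ≤ nm z0 G := by rw [hC]; rw [hΛ] at ha; linarith
  have hsH : 2*C + 4*δ + 1 ≤ nm z0 H := by rw [hC]; rw [hΛ] at hb; linarith
  have hsGH : 2*C + 4*δ + 1 ≤ nm z0 (G*H) := by
    rw [hC]; rw [hΛ] at ha hb; linarith
  have hsHG : 2*C + 4*δ + 1 ≤ nm z0 (H*G) := by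
    rw [hC]; rw [hΛ] at ha hb; linarith
  refine ⟨p*(k₀*N) + q*(l₀*N), 4*(C+δ), 2*C + 4*δ + 1, by omega, by linarith, ?_⟩
  intro w hw
  have hsur := survivor hδ hyp C G H (G*H) (H*G) w
    (by rw [hC]; linarith) (by rw [hC]; linarith) (by rw [hC]; linarith)
    (by rw [hC]; linarith) (by rw [hC]; linarith) (by rw [hC]; linarith)
    (by rw [hC]; linarith) (by rw [hC]; linarith)
  obtain ⟨s, hsmem, hs1, hs2⟩ := hsur
  have hnms : 2*C + 4*δ + 1 ≤ nm z0 s ∧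
      ∃ mm : ℕ, 1 ≤ mm ∧ mm ≤ p*(k₀*N) + q*(l₀*N) ∧ s ∈ B ^ mm := by
    rcases hsmem with rfl | rfl | rfl | rfl
    · exact ⟨hsG, p*(k₀*N), hmG1, Nat.le_add_right _ _, hmemG⟩
    · exact ⟨hsH, q*(l₀*N), hmH1, Nat.le_add_left _ _, hmemH⟩
    · exact ⟨hsGH, p*(k₀*N) + q*(l₀*N), by omega, le_rfl, hmemGH⟩
    · exact ⟨hsHG, q*(l₀*N) + p*(k₀*N), by omega, by omega, hmemHG⟩
  obtain ⟨hnms', mm, hmm1, hmmle, hmmmem⟩ := hnms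
  refine ⟨s, mm, hmm1, hmmle, hmmmem, ?_⟩
  have htau := tau_lower hδ hyp hiso C hC0 w s hs1 hs2 hw hnms'
  have := nm_nonneg z0 s
  linarith

end BW6

end BMS
namespace BMS

section BW7

variable {X : Type*} [MetricSpace X] {Γ : Type*} [Group Γ] [MulAction Γ X]
variable {δ : ℝ} {z0 : X}

lemma mem_closure_pow (B : Set Γ) (x : Γ) (hx : x ∈ Subsemigroup.closure B) :
    ∃ n, 1 ≤ n ∧ x ∈ B^n := by
  induction hx using Subsemigroup.closure_induction with
  | mem y hy => exact ⟨1, le_rfl, by simpa [pow_one] using hy⟩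
  | mul y z _ _ hy hz =>
    obtain ⟨n, hn, hyn⟩ := hy
    obtain ⟨m, hm, hzm⟩ := hz
    exact ⟨n + m, by omega, by rw [pow_add]; exact Set.mul_mem_mul hyn hzm⟩

lemma lox_growth (hiso : IsIsomAction Γ X) (z0 : X) (g : Γ) (hg : IsLoxodromic X g) :
    ∀ c : ℝ, ∃ N : ℕ, ∀ k, N ≤ k → c ≤ nm z0 (g^k) := by
  obtain ⟨x, lam, Cq, hlam, hCq, hq⟩ := hg
  intro c
  set D := dist x z0 with hD
  have hD0 : 0 ≤ D := dist_nonneg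
  have hlam0 : 0 < lam := by linarith
  refine ⟨⌈lam * (c + Cq + 2*D)⌉₊ + 1, fun k hk => ?_⟩
  have h1 := (hq (k:ℤ) 0).1
  simp only [zpow_natCast, zpow_zero, one_smul, Int.cast_natCast, Int.cast_zero,
    sub_zero] at h1
  rw [abs_of_nonneg (by positivity : (0:ℝ) ≤ (k:ℝ))] at h1
  have h2 : dist ((g^k) • x) x ≤ D + nm z0 (g^k) + D := by
    have t1 := dist_triangle ((g^k) • x) ((g^k) • z0) z0
    have t2 := dist_triangle ((g^k) • x) z0 x
    have t3 := hiso (g^k) x z0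
    unfold nm
    rw [t3] at t1
    rw [hD]
    rw [dist_comm z0 x] at t2
    linarith
  have hkR : lam * (c + Cq + 2*D) ≤ (k:ℝ) := by
    have := Nat.le_ceil (lam * (c + Cq + 2*D))
    have hcast : ((⌈lam * (c + Cq + 2*D)⌉₊ + 1 : ℕ):ℝ) ≤ (k:ℝ) := by exact_mod_cast hk
    push_cast at hcast
    linarith
  have hinv : lam * lam⁻¹ = 1 := mul_inv_cancel₀ (ne_of_gt hlam0)
  -- from h1 : lam⁻¹ * k - Cq ≤ dist ((g^k)•x) x  and h2
  have h3 : lam⁻¹ * (k:ℝ) - Cq - 2*D ≤ nm z0 (g^k) := by linarith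
  have h4 : c + Cq + 2*D ≤ lam⁻¹ * (k:ℝ) := by
    have h5 : lam * (lam⁻¹ * (k:ℝ)) = (k:ℝ) := by
      rw [← mul_assoc, hinv, one_mul]
    nlinarith [hkR, hlam0]
  linarith

lemma not_same_end (u v : ℕ → X) (h : ¬ SameEnd z0 u v) :
    ∃ M, 0 ≤ M ∧ ∀ K : ℕ, ∃ k, K ≤ k ∧ gp z0 (u k) (v k) ≤ M := by
  unfold SameEnd at h
  rw [Filter.tendsto_atTop_atTop] at h
  push_neg at h
  obtain ⟨b, hb⟩ := h
  refine ⟨max b 0, le_max_right _ _, fun K => ?_⟩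
  obtain ⟨k, hk, hlt⟩ := hb K
  exact ⟨k, hk, le_trans (le_of_lt hlt) (le_max_left _ _)⟩

lemma raySeq_true (g : Γ) (n : ℕ) : raySeq z0 g true n = (g^n) • z0 := by
  unfold raySeq
  simp only [if_true, zpow_natCast]

lemma raySeq_false (g : Γ) (n : ℕ) : raySeq z0 g false n = ((g⁻¹)^n) • z0 := by
  unfold raySeq
  simp only [if_false, Bool.false_eq_true]
  rw [zpow_neg, zpow_natCast, inv_pow]

/-- Packaging of the non-elementarity assumption. -/
lemma nonelem_package (hiso : IsIsomAction Γ X) (z0 : X) (B : Set Γ)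
    (hne : NonElementarySet z0 B) :
    ∃ (g h : Γ) (p q : ℕ), 1 ≤ p ∧ 1 ≤ q ∧ g ∈ B^p ∧ h ∈ B^q ∧
      (∀ c : ℝ, ∃ N : ℕ, ∀ k, N ≤ k → c ≤ nm z0 (g^k)) ∧
      (∀ c : ℝ, ∃ N : ℕ, ∀ k, N ≤ k → c ≤ nm z0 (h^k)) ∧
      (∃ M, 0 ≤ M ∧ ∀ K : ℕ, ∃ k, K ≤ k ∧ gp z0 ((g^k) • z0) (((g⁻¹)^k) • z0) ≤ M) ∧
      (∃ M, 0 ≤ M ∧ ∀ K : ℕ, ∃ k, K ≤ k ∧ gp z0 ((h^k) • z0) (((h⁻¹)^k) • z0) ≤ M) ∧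
      (∀ e f : Γ, (e = g ∨ e = g⁻¹) → (f = h ∨ f = h⁻¹) →
        ∃ M, 0 ≤ M ∧ ∀ K : ℕ, ∃ k, K ≤ k ∧ gp z0 ((e^k) • z0) ((f^k) • z0) ≤ M) := by
  obtain ⟨g, h, hgcl, hhcl, hlox⟩ := hne
  obtain ⟨hgl, hhl, hgse, hhse, hmix⟩ := hlox
  obtain ⟨p, hp, hgB⟩ := mem_closure_pow B g hgcl
  obtain ⟨q, hq, hhB⟩ := mem_closure_pow B h hhcl
  refine ⟨g, h, p, q, hp, hq, hgB, hhB, lox_growth hiso z0 g hgl, lox_growth hiso z0 h hhl,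
    ?_, ?_, ?_⟩
  · obtain ⟨M, hM0, hM⟩ := not_same_end (raySeq z0 g true) (raySeq z0 g false) hgse
    refine ⟨M, hM0, fun K => ?_⟩
    obtain ⟨k, hk, hb⟩ := hM K
    rw [raySeq_true, raySeq_false] at hb
    exact ⟨k, hk, hb⟩
  · obtain ⟨M, hM0, hM⟩ := not_same_end (raySeq z0 h true) (raySeq z0 h false) hhse
    refine ⟨M, hM0, fun K => ?_⟩
    obtain ⟨k, hk, hb⟩ := hM K
    rw [raySeq_true, raySeq_false] at hb
    exact ⟨k, hk, hb⟩
  · intro e f he hf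
    have hse : ∀ s t : Bool, ∃ M, 0 ≤ M ∧ ∀ K : ℕ, ∃ k, K ≤ k ∧
        gp z0 (raySeq z0 g s k) (raySeq z0 h t k) ≤ M :=
      fun s t => not_same_end _ _ (hmix s t)
    rcases he with rfl | rfl <;> rcases hf with rfl | rfl
    · obtain ⟨M, hM0, hM⟩ := hse true true
      refine ⟨M, hM0, fun K => ?_⟩
      obtain ⟨k, hk, hb⟩ := hM K
      rw [raySeq_true, raySeq_true] at hb
      exact ⟨k, hk, hb⟩
    · obtain ⟨M, hM0, hM⟩ := hse true false
      refine ⟨M, hM0, fun K => ?_⟩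
      obtain ⟨k, hk, hb⟩ := hM K
      rw [raySeq_true, raySeq_false] at hb
      exact ⟨k, hk, hb⟩
    · obtain ⟨M, hM0, hM⟩ := hse false true
      refine ⟨M, hM0, fun K => ?_⟩
      obtain ⟨k, hk, hb⟩ := hM K
      rw [raySeq_false, raySeq_true] at hb
      exact ⟨k, hk, hb⟩
    · obtain ⟨M, hM0, hM⟩ := hse false false
      refine ⟨M, hM0, fun K => ?_⟩
      obtain ⟨k, hk, hb⟩ := hM K
      rw [raySeq_false, raySeq_false] at hb
      exact ⟨k, hk, hb⟩

/-- The key geometric input for the Berger–Wang argument. -/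
lemma key_geom (hδ : 0 < δ) (hyp : HypWith δ X) (hiso : IsIsomAction Γ X)
    (z0 : X) (B : Set Γ) (hne : NonElementarySet z0 B) :
    B.Nonempty ∧ ∃ (mstar : ℕ) (c₀ r₀ : ℝ), 1 ≤ mstar ∧ 0 ≤ c₀ ∧
      ∀ w : Γ, r₀ ≤ nm z0 w → ∃ (s : Γ) (mm : ℕ), 1 ≤ mm ∧ mm ≤ mstar ∧ s ∈ B ^ mm ∧
        nm z0 w - c₀ ≤ stableLength z0 (w*s) := by
  obtain ⟨g, h, p, q, hp, hq, hgB, hhB, hgrowg, hgrowh, hfg, hfh, hfmix⟩ :=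
    nonelem_package hiso z0 B hne
  constructor
  · by_contra hB
    rw [Set.not_nonempty_iff_eq_empty] at hB
    subst hB
    rw [Set.empty_pow (by omega)] at hgB
    exact hgB
  · exact main_geom hδ hyp hiso B g h p q hp hq hgB hhB hgrowg hgrowh hfg hfh hfmix

end BW7

end BMS
namespace BMS

section BW8

variable {X : Type*} [MetricSpace X] {Γ : Type*} [Group Γ] [MulAction Γ X]

lemma freq_of_lt_limsup {u : ℕ → ENNReal} {c : ENNReal} (h : c < limsup u atTop) :
    ∀ n₀ : ℕ, ∃ k, n₀ ≤ k ∧ c < u k := by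
  rw [limsup_eq_iInf_iSup_of_nat] at h
  intro n₀
  have h2 : c < ⨆ i, ⨆ (_ : i ≥ n₀), u i := lt_of_lt_of_le h (iInf_le _ n₀)
  rw [lt_iSup_iff] at h2
  obtain ⟨i, hi⟩ := h2
  rw [lt_iSup_iff] at hi
  obtain ⟨hin, hci⟩ := hi
  exact ⟨i, hin, hci⟩

lemma le_limsup_of_freq {u : ℕ → ENNReal} {c : ENNReal}
    (h : ∀ n₀ : ℕ, ∃ k, n₀ ≤ k ∧ c ≤ u k) : c ≤ limsup u atTop := by
  rw [limsup_eq_iInf_iSup_of_nat]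
  refine le_iInf fun n => ?_
  obtain ⟨k, hk, hck⟩ := h n
  exact le_trans hck (le_iSup₂ (f := fun i (_ : i ≥ n) => u i) k hk)

lemma le_liminf_of_ev {u : ℕ → ENNReal} {c : ENNReal} (j₀ : ℕ)
    (h : ∀ j, j₀ ≤ j → c ≤ u j) : c ≤ liminf u atTop := by
  rw [liminf_eq_iSup_iInf_of_nat]
  refine le_trans ?_ (le_iSup (fun n => ⨅ i, ⨅ (_ : i ≥ n), u i) j₀)
  exact le_iInf₂ fun i hi => h i hi

lemma extract (z0 : X) (B : Set Γ) (r : ℝ) (hr : 0 < r) (k : ℕ) (hk : 1 ≤ k)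
    (h : ENNReal.ofReal r < dispSup z0 B k / k) :
    ∃ w : Γ, w ∈ B^k ∧ r * k < nm z0 w := by
  have hk0 : ((k:ℕ):ENNReal) ≠ 0 := by
    simp only [ne_eq, Nat.cast_eq_zero]
    omega
  rw [ENNReal.lt_div_iff_mul_lt (Or.inl hk0) (Or.inl (ENNReal.natCast_ne_top k))] at h
  have e1 : ENNReal.ofReal r * ((k:ℕ):ENNReal) = ENNReal.ofReal (r * k) := by
    rw [ENNReal.ofReal_mul hr.le, ENNReal.ofReal_natCast]
  rw [e1] at h
  unfold dispSup at h
  rw [lt_iSup_iff] at h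
  obtain ⟨w, hw⟩ := h
  rw [lt_iSup_iff] at hw
  obtain ⟨hwB, hwlt⟩ := hw
  exact ⟨w, hwB, (ENNReal.ofReal_lt_ofReal_iff_of_nonneg (by positivity)).mp hwlt⟩

end BW8

end BMS
namespace BMS

set_option maxHeartbeats 1000000 in
/-- **Lemma (geometric Berger–Wang equality).** For a non-elementary subset `B` of
isometries of a geodesic Gromov-hyperbolic space, `ℓ_∞(B) = ℓ(B)` where
`ℓ_∞(B) = limsup_k sup_{g ∈ B^k} ℓ(g)/k`. -/
theorem geometric_berger_wang
    {X : Type*} [MetricSpace X] {Γ : Type*} [Group Γ] [MulAction Γ X]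
    (hiso : IsIsomAction Γ X) (hgeo : GeodesicSpace X) (hhyp : GromovHyperbolic X)
    (z0 : X) (B : Set Γ) (hne : NonElementarySet z0 B) :
    ∃ L : ENNReal,
      Tendsto (fun n : ℕ => dispSup z0 B n / n) atTop (𝓝 L) ∧
      limsup (fun k : ℕ =>
        (⨆ g ∈ B ^ k, ENNReal.ofReal (stableLength z0 g)) / k) atTop = L := by
  classical
  obtain ⟨δ, hδ, hyp⟩ := hhyp
  obtain ⟨⟨b, hbB⟩, mstar, c₀, r₀, hmstar1, hc₀0, hkey⟩ := key_geom hδ hyp hiso z0 B hne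
  have hβ0 : 0 ≤ nm z0 b := nm_nonneg z0 b
  set β := nm z0 b with hβ
  set D : ℕ → ENNReal := dispSup z0 B with hD
  set SL : ℕ → ENNReal := fun k => ⨆ g ∈ B ^ k, ENNReal.ofReal (stableLength z0 g) with hSL
  set L := limsup (fun n : ℕ => D n / n) atTop with hL
  -- the easy comparison
  have hFD : ∀ k : ℕ, SL k / (k:ENNReal) ≤ D k / (k:ENNReal) := by
    intro k
    refine ENNReal.div_le_div ?_ le_rfl
    rw [hSL, hD]
    refine iSup₂_le fun g hg => ?_
    refine le_trans (ENNReal.ofReal_le_ofReal (stable_le_nm z0 g)) ?_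
    exact le_iSup₂ (f := fun g (_ : g ∈ B^k) => ENNReal.ofReal (dist (g • z0) z0)) g hg
  -- the main estimate
  have main : ∀ c : ENNReal, c < L →
      c < limsup (fun k : ℕ => SL k / k) atTop ∧ c < liminf (fun n : ℕ => D n / n) atTop := by
    intro c hc
    obtain ⟨c₁, hcc₁, hc₁L⟩ := exists_between hc
    obtain ⟨c₂, hc₁c₂, hc₂L⟩ := exists_between hc₁L
    have hc₁top : c₁ ≠ ⊤ := ne_top_of_lt hc₁c₂
    have hc₂top : c₂ ≠ ⊤ := ne_top_of_lt hc₂L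
    set ρ := c₁.toReal with hρdef
    set r := c₂.toReal with hrdef
    have hc₁eq : ENNReal.ofReal ρ = c₁ := ENNReal.ofReal_toReal hc₁top
    have hc₂eq : ENNReal.ofReal r = c₂ := ENNReal.ofReal_toReal hc₂top
    have hρ0 : 0 ≤ ρ := ENNReal.toReal_nonneg
    have hρr : ρ < r := (ENNReal.toReal_lt_toReal hc₁top hc₂top).mpr hc₁c₂
    have hr0 : 0 < r := lt_of_le_of_lt hρ0 hρr
    have hfreq : ∀ n₀ : ℕ, ∃ k, n₀ ≤ k ∧ ENNReal.ofReal r < D k / k := by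
      intro n₀
      refine freq_of_lt_limsup ?_ n₀
      rw [hc₂eq]
      exact hc₂L
    have hstep : ∀ n₀ : ℕ, ∃ (k k' : ℕ) (a : Γ), n₀ ≤ k ∧ 1 ≤ k ∧ k < k' ∧ k' ≤ k + mstar ∧
        a ∈ B^k' ∧ r * k - c₀ ≤ stableLength z0 a := by
      intro n₀
      obtain ⟨k, hk1, hk2⟩ := hfreq (max (max n₀ 1) (⌈r₀ / r⌉₊ + 1))
      have hkn₀ : n₀ ≤ k := le_trans (le_trans (le_max_left _ _) (le_max_left _ _)) hk1
      have hk1' : 1 ≤ k := le_trans (le_trans (le_max_right _ _) (le_max_left _ _)) hk1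
      have hkr₀ : r₀ ≤ r * k := by
        have h1 : (⌈r₀ / r⌉₊ + 1 : ℕ) ≤ k := le_trans (le_max_right _ _) hk1
        have h1' : ((⌈r₀ / r⌉₊ + 1 : ℕ):ℝ) ≤ (k:ℝ) := by exact_mod_cast h1
        have h2 : r₀ / r ≤ (k:ℝ) := by
          have h3 := Nat.le_ceil (r₀ / r)
          push_cast at h1'
          linarith
        calc r₀ = r * (r₀ / r) := by field_simp
        _ ≤ r * k := mul_le_mul_of_nonneg_left h2 hr0.le
      obtain ⟨w, hwB, hwnm⟩ := extract z0 B r hr0 k hk1' hk2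
      obtain ⟨s, mm, hmm1, hmmle, hsmem, htau⟩ := hkey w (le_trans hkr₀ hwnm.le)
      refine ⟨k, k + mm, w*s, hkn₀, hk1', by omega, by omega, ?_, by linarith⟩
      rw [pow_add]
      exact Set.mul_mem_mul hwB hsmem
    constructor
    · -- c < limsup SL/k
      refine lt_of_lt_of_le (hc₁eq ▸ hcc₁) (le_limsup_of_freq ?_)
      intro n₀
      obtain ⟨k, k', a, hk, hk1, hkk', hk'le, haB, hatau⟩ :=
        hstep (max n₀ (⌈(c₀ + ρ * mstar + 1) / (r - ρ)⌉₊ + 1))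
      have hkK₂ : (⌈(c₀ + ρ * mstar + 1) / (r - ρ)⌉₊ + 1 : ℕ) ≤ k :=
        le_trans (le_max_right _ _) hk
      refine ⟨k', le_trans (le_trans (le_max_left _ _) hk) (le_of_lt hkk'), ?_⟩
      have hnum : ENNReal.ofReal (r * k - c₀) ≤ SL k' := by
        rw [hSL]
        refine le_trans (ENNReal.ofReal_le_ofReal hatau) ?_
        exact le_iSup₂ (f := fun g (_ : g ∈ B^k') => ENNReal.ofReal (stableLength z0 g)) a haB
      have hreal : ρ * ((k:ℝ) + mstar) ≤ r * k - c₀ := by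
        have h1 : ((⌈(c₀ + ρ * mstar + 1) / (r - ρ)⌉₊ + 1 : ℕ):ℝ) ≤ (k:ℝ) := by
          exact_mod_cast hkK₂
        have h2 := Nat.le_ceil ((c₀ + ρ * mstar + 1) / (r - ρ))
        push_cast at h1
        have h3 : (c₀ + ρ * mstar + 1) / (r - ρ) ≤ (k:ℝ) := by linarith
        have h4 : (c₀ + ρ * mstar + 1) ≤ (k:ℝ) * (r - ρ) := by
          rw [div_le_iff₀ (by linarith)] at h3
          linarith
        nlinarith
      calc ENNReal.ofReal ρ
          ≤ ENNReal.ofReal ((r * k - c₀) / ((k:ℝ) + mstar)) := by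
            refine ENNReal.ofReal_le_ofReal ?_
            rw [le_div_iff₀ (by positivity)]
            linarith
      _ = ENNReal.ofReal (r * k - c₀) / ENNReal.ofReal ((k:ℝ) + mstar) :=
            ENNReal.ofReal_div_of_pos (by positivity)
      _ = ENNReal.ofReal (r * k - c₀) / (((k + mstar : ℕ):ℕ):ENNReal) := by
            rw [← ENNReal.ofReal_natCast (k + mstar)]
            push_cast
            ring_nf
      _ ≤ SL k' / (k':ENNReal) := by
            refine ENNReal.div_le_div hnum ?_
            exact_mod_cast hk'le
    · -- c < liminf D
      refine lt_of_lt_of_le (hc₁eq ▸ hcc₁) ?_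
      set ρp := (ρ + r)/2 with hρp
      have hρρp : ρ < ρp := by rw [hρp]; linarith
      have hρpr : ρp < r := by rw [hρp]; linarith
      obtain ⟨k, k', a, hk, hk1, hkk', hk'le, haB, hatau⟩ :=
        hstep (⌈(c₀ + ρp * mstar) / (r - ρp)⌉₊ + 1)
      have hk'1 : 1 ≤ k' := by omega
      have hT : ρp * k' ≤ stableLength z0 a := by
        have h1 : ((⌈(c₀ + ρp * mstar) / (r - ρp)⌉₊ + 1 : ℕ):ℝ) ≤ (k:ℝ) := by exact_mod_cast hk
        have h2 := Nat.le_ceil ((c₀ + ρp * mstar) / (r - ρp))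
        push_cast at h1
        have h3 : (c₀ + ρp * mstar) / (r - ρp) ≤ (k:ℝ) := by linarith
        have h4 : c₀ + ρp * mstar ≤ (k:ℝ) * (r - ρp) := by
          rw [div_le_iff₀ (by linarith)] at h3
          linarith
        have h5 : (k':ℝ) ≤ (k:ℝ) + mstar := by exact_mod_cast hk'le
        have h6 : ρp * k' ≤ r * k - c₀ := by nlinarith [hρ0, hρρp]
        linarith
      set NN : ℕ := ⌈(ρ + β) / (ρp - ρ)⌉₊ + 1 with hNN
      refine le_liminf_of_ev (k' * (NN + 1)) ?_
      intro j hj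
      have hk'pos : 0 < k' := by omega
      have hdm := Nat.div_add_mod j k'
      set n := j / k' with hn
      set i := j % k' with hi
      have hik' : i < k' := Nat.mod_lt _ hk'pos
      have hn1 : NN + 1 ≤ n := by
        rw [hn, Nat.le_div_iff_mul_le hk'pos]
        calc (NN+1) * k' = k' * (NN+1) := mul_comm _ _
        _ ≤ j := hj
      have haj : a^n * b^i ∈ B^j := by
        have h1 : a^n ∈ (B^k')^n := Set.pow_mem_pow haB
        rw [← pow_mul] at h1
        have h3 : a^n * b^i ∈ B^(k'*n) * B^i := Set.mul_mem_mul h1 (Set.pow_mem_pow hbB)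
        rw [← pow_add] at h3
        rwa [hdm] at h3
      have hnm : (n:ℝ) * (ρp * k') - (k':ℝ)*β ≤ nm z0 (a^n * b^i) := by
        have h1 := nm_mul_ge z0 hiso (a^n) (b^i)
        have h2 := le_stable_mul z0 a n (by omega)
        have h3 := nm_pow_le z0 hiso b i
        have h4 : (i:ℝ) * β ≤ (k':ℝ) * β := by
          refine mul_le_mul_of_nonneg_right ?_ hβ0
          exact_mod_cast hik'.le
        have h5 : (n:ℝ) * (ρp * k') ≤ (n:ℝ) * stableLength z0 a :=
          mul_le_mul_of_nonneg_left hT (by positivity)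
        rw [← hβ] at h3
        linarith
      have hDj : ENNReal.ofReal ((n:ℝ)*(ρp*k') - (k':ℝ)*β) ≤ D j := by
        rw [hD]
        refine le_trans (ENNReal.ofReal_le_ofReal hnm) ?_
        exact le_iSup₂ (f := fun g (_ : g ∈ B^j) => ENNReal.ofReal (dist (g • z0) z0))
          (a^n * b^i) haj
      have hjpos : 0 < j := by
        have : 0 < k' * (NN + 1) := Nat.mul_pos hk'pos (by omega)
        omega
      have hrealj : ρ * j ≤ (n:ℝ)*(ρp*k') - (k':ℝ)*β := by
        have hjle : (j:ℝ) ≤ (k':ℝ)*(n:ℝ) + (k':ℝ) := by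
          have : j ≤ k'*n + k' := by omega
          exact_mod_cast this
        have hgap : 0 < ρp - ρ := by linarith
        have hceil := Nat.le_ceil ((ρ + β) / (ρp - ρ))
        have hnNN : ((NN:ℕ):ℝ) + 1 ≤ (n:ℝ) := by exact_mod_cast hn1
        have hNNge : (ρ + β) / (ρp - ρ) ≤ ((NN:ℕ):ℝ) := by
          rw [hNN]; push_cast; linarith
        have h7 : (ρ + β) ≤ ((NN:ℕ):ℝ) * (ρp - ρ) := by
          rw [div_le_iff₀ hgap] at hNNge
          linarith
        have h8 : ρ + β ≤ (n:ℝ) * (ρp - ρ) := by nlinarith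
        have hk'R : (0:ℝ) < (k':ℝ) := by exact_mod_cast hk'pos
        nlinarith [hρ0]
      calc ENNReal.ofReal ρ
          ≤ ENNReal.ofReal (((n:ℝ)*(ρp*k') - (k':ℝ)*β) / (j:ℝ)) := by
            refine ENNReal.ofReal_le_ofReal ?_
            rw [le_div_iff₀ (by exact_mod_cast hjpos)]
            linarith
      _ = ENNReal.ofReal ((n:ℝ)*(ρp*k') - (k':ℝ)*β) / ENNReal.ofReal ((j:ℕ):ℝ) :=
            ENNReal.ofReal_div_of_pos (by exact_mod_cast hjpos)
      _ = ENNReal.ofReal ((n:ℝ)*(ρp*k') - (k':ℝ)*β) / ((j:ℕ):ENNReal) := by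
            rw [ENNReal.ofReal_natCast]
      _ ≤ D j / (j:ENNReal) := ENNReal.div_le_div hDj le_rfl
  -- conclude
  have hlimsupF_ge : L ≤ limsup (fun k : ℕ => SL k / k) atTop :=
    le_of_forall_lt fun c hc => (main c hc).1
  have hliminf_ge : L ≤ liminf (fun n : ℕ => D n / n) atTop :=
    le_of_forall_lt fun c hc => (main c hc).2
  have hlimsupF_le : limsup (fun k : ℕ => SL k / k) atTop ≤ L := by
    rw [hL]
    exact limsup_le_limsup (Filter.Eventually.of_forall hFD)
  have hliminf_le : liminf (fun n : ℕ => D n / n) atTop ≤ L := by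
    rw [hL]
    exact liminf_le_limsup
  refine ⟨L, ?_, le_antisymm hlimsupF_le hlimsupF_ge⟩
  exact tendsto_of_liminf_eq_limsup (le_antisymm hliminf_le hliminf_ge) hL.symm

end BMS
end
end
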